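/- arXiv:math/0605060 — 6 statements merged into one kernel-verified Lean document; each statement's English description precedes it below -/
import Mathlib

section
/- The number of inversions and the major index are equidistributed on the symmetric group: for every n, the sum over all permutations σ of S_n of q^{maj(σ)} equals the sum of q^{inv(σ)}, and both equal the q-factorial [n]_q! = ∏_{i=1}^n (1-q^i)/(1-q). -/
open Finset

namespace Paper

/-- The word of `σ` at 0-based position `i`, with 0-based values (`0` outside range). -/
def wrd {n : ℕ} (σ : Equiv.Perm (Fin n)) (i : ℕ) : ℕ :=
  if h : i < n then (σ ⟨i, h⟩ : ℕ) else 0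

/-- The descent set of `σ`, in 1-based positions: `{ i ∈ {1,…,n-1} | σ(i) > σ(i+1) }`. -/
def Des {n : ℕ} (σ : Equiv.Perm (Fin n)) : Finset ℕ :=
  (Finset.Ioo 0 n).filter fun i => wrd σ i < wrd σ (i - 1)

/-- The major index: the sum of the (1-based) descent positions. -/
def maj {n : ℕ} (σ : Equiv.Perm (Fin n)) : ℕ := ∑ i ∈ Des σ, i

/-- The number of descents. -/
def des {n : ℕ} (σ : Equiv.Perm (Fin n)) : ℕ := (Des σ).card

/-- The number of inversions. -/
def inv {n : ℕ} (σ : Equiv.Perm (Fin n)) : ℕ :=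
  (Finset.univ.filter fun p : Fin n × Fin n => p.1 < p.2 ∧ σ p.2 < σ p.1).card

/-- The Lehmer code, as a function `ℕ → ℕ` (0-based index, zero outside `[0, n)`):
`Lc σ i = #{ j > i | σ(j) < σ(i) }`. -/
def Lc {n : ℕ} (σ : Equiv.Perm (Fin n)) (i : ℕ) : ℕ :=
  if h : i < n then (Finset.univ.filter fun j : Fin n => i < (j : ℕ) ∧ σ j < σ ⟨i, h⟩).card
  else 0

/-- The inversion code (invcode) is the Lehmer code of the inverse. -/
def Ic {n : ℕ} (σ : Equiv.Perm (Fin n)) : ℕ → ℕ := Lc σ⁻¹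

/-- The word of a permutation, with 1-based values. -/
def word {n : ℕ} (σ : Equiv.Perm (Fin n)) : List ℕ := List.ofFn fun i => (σ i : ℕ) + 1

/-- The major index of a word: the sum of the 1-based positions `t` with `w_t > w_{t+1}`. -/
def majL (l : List ℕ) : ℕ :=
  ∑ t ∈ Finset.range (l.length - 1), if l.getD (t + 1) 0 < l.getD t 0 then t + 1 else 0

/-- The major code, as a function `ℕ → ℕ` (0-based index `i`, i.e. paper's `m_{i+1}`):
`m_i = maj(σ^{(i)}) - maj(σ^{(i+1)})` where `σ^{(i)}` keeps only the letters `≥ i`. -/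
def Mc {n : ℕ} (σ : Equiv.Perm (Fin n)) (i : ℕ) : ℕ :=
  majL ((word σ).filter fun x => decide (i + 1 ≤ x)) -
    majL ((word σ).filter fun x => decide (i + 2 ≤ x))

/-- The saillance code, as a function `ℕ → ℕ` (0-based index `i`, i.e. about the letter of
0-based value `i`): the number of letters of `σ` that are `≥` the rightmost letter located to
the left of `i` and greater than `i` (0 if there is no such letter). -/
def Sc {n : ℕ} (σ : Equiv.Perm (Fin n)) (i : ℕ) : ℕ :=
  if h : i < n then
    let L := Finset.univ.filter fun j : Fin n => j < σ⁻¹ ⟨i, h⟩ ∧ (⟨i, h⟩ : Fin n) < σ j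
    if hL : L.Nonempty then n - (σ (L.max' hL) : ℕ) else 0
  else 0

/-- Sub-diagonal sequences, as functions `ℕ → ℕ` supported on `[0, n)` with
`c_i ≤ n - 1 - i` there (0-based; i.e. `0 ≤ c_i ≤ n - i` in 1-based indexing). -/
def SubDiag (n : ℕ) : Set (ℕ → ℕ) :=
  {c | (∀ i, i < n → c i + i < n) ∧ ∀ i, n ≤ i → c i = 0}

/-- The permutation `τ_M(β)` of `{0,…,n}`: `τ_M(β)(i) = des(β) - j` if `i` is the `j`-th
descent of `β`, and `τ_M(β)(i) = des(β) + j - 1` if `i` is the `j`-th rise (position `0`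
counting as a rise). -/
def tauM {n : ℕ} (β : Equiv.Perm (Fin n)) (i : ℕ) : ℕ :=
  if i ∈ Des β then des β - ((Des β).filter fun d => d ≤ i).card
  else des β + ((Finset.range (i + 1)).filter fun r => r ∉ Des β).card - 1

/-- The permutation `τ_S(β)` of `{0,…,n}`: `τ_S(β)(0) = 0` and `τ_S(β)(i) = n + 1 - β(i)`
(1-based values) for `1 ≤ i ≤ n`. -/
def tauS {n : ℕ} (β : Equiv.Perm (Fin n)) (i : ℕ) : ℕ :=
  if h : 1 ≤ i ∧ i ≤ n then n - (β ⟨i - 1, by omega⟩ : ℕ) else 0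

/-- The complete homogeneous symmetric polynomial `h_k(X_m)` in the variables
`x_0, …, x_m`. -/
noncomputable def hpoly (k m : ℕ) : MvPolynomial ℕ ℤ :=
  ∑ f ∈ Finset.univ.filter (fun f : Fin k → Fin (m + 1) => ∀ a b : Fin k, a ≤ b → f a ≤ f b),
    ∏ t : Fin k, MvPolynomial.X ((f t : ℕ))

/-- The (proper) descent set of a composition `I = (i_1,…,i_r)`:
`{i_1, i_1+i_2, …, i_1+⋯+i_{r-1}}`. -/
def DesComp (I : List ℕ) : Finset ℕ :=
  (Finset.range (I.length - 1)).image fun k => (I.take (k + 1)).sum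

end Paper



section MMproof
open Equiv


namespace MM

variable {n : ℕ}

def ins (p : Fin (n+1)) (τ : Equiv.Perm (Fin n)) : Equiv.Perm (Fin (n+1)) :=
  (finSuccEquiv' p).trans ((τ.optionCongr).trans (finSuccEquiv' (Fin.last n)).symm)

lemma ins_self (p : Fin (n+1)) (τ : Equiv.Perm (Fin n)) : ins p τ p = Fin.last n := by
  simp [ins, finSuccEquiv'_at, finSuccEquiv'_symm_none]

lemma ins_succAbove (p : Fin (n+1)) (τ : Equiv.Perm (Fin n)) (j : Fin n) :
    ins p τ (p.succAbove j) = (τ j).castSucc := by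
  simp only [ins, Equiv.trans_apply, finSuccEquiv'_succAbove, Equiv.optionCongr_apply,
    Option.map_some, finSuccEquiv'_symm_some, Fin.succAbove_last]

lemma ins_bijective : Function.Bijective (fun pt : Fin (n+1) × Equiv.Perm (Fin n) => ins pt.1 pt.2) := by
  rw [Fintype.bijective_iff_injective_and_card]
  constructor
  · rintro ⟨p, τ⟩ ⟨p', τ'⟩ h
    simp only [Prod.mk.injEq] at h ⊢
    have hp : p = p' := by
      have h1 : ins p τ p = Fin.last n := ins_self p τ
      have h2 : ins p' τ' p' = Fin.last n := ins_self p' τ'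
      by_contra hne
      obtain ⟨j, hj⟩ := Fin.exists_succAbove_eq (fun h => hne h.symm : p' ≠ p)
      have h3 := ins_succAbove p τ j
      rw [hj, h, h2] at h3
      exact (Fin.ne_last_of_lt (Fin.castSucc_lt_last (τ j))) h3.symm
    subst hp
    refine ⟨rfl, Equiv.ext fun j => ?_⟩
    have := congrFun (congrArg (fun e => e.toFun) h) (p.succAbove j)
    have h2 : ins p τ (p.succAbove j) = ins p τ' (p.succAbove j) := by rw [h]
    rw [ins_succAbove, ins_succAbove] at h2
    exact Fin.castSucc_injective _ h2
  · simp [Fintype.card_perm, Nat.factorial_succ]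

end MM


namespace MM
open Paper

lemma wrd_lt (τ : Equiv.Perm (Fin n)) (i : ℕ) (h : i < n) : wrd τ i < n := by
  rw [wrd, dif_pos h]; exact (τ ⟨i, h⟩).isLt

lemma wrd_ins (p : Fin (n+1)) (τ : Equiv.Perm (Fin n)) (i : ℕ) (h : i < n+1) :
    wrd (ins p τ) i =
      if i = (p : ℕ) then n else if i < (p : ℕ) then wrd τ i else wrd τ (i-1) := by
  rcases eq_or_ne i (p : ℕ) with he | he
  · have : (⟨i, h⟩ : Fin (n+1)) = p := Fin.ext he
    rw [wrd, dif_pos h, this, ins_self, if_pos he, Fin.val_last]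
  · rw [if_neg he]
    rcases lt_or_gt_of_ne he with hlt | hgt
    · have hin : i < n := lt_of_lt_of_le hlt (Nat.lt_succ_iff.mp p.isLt)
      have hsa : p.succAbove ⟨i, hin⟩ = ⟨i, h⟩ := by
        rw [Fin.succAbove_of_castSucc_lt]
        · rfl
        · exact hlt
      rw [wrd, dif_pos h, ← hsa, ins_succAbove, if_pos hlt, wrd, dif_pos hin,
        Fin.coe_castSucc]
    · have h1 : 1 ≤ i := Nat.one_le_iff_ne_zero.mpr (by omega)
      have hin : i - 1 < n := by omega
      have hsa : p.succAbove ⟨i-1, hin⟩ = ⟨i, h⟩ := by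
        rw [Fin.succAbove_of_le_castSucc]
        · apply Fin.ext; simp [Fin.val_succ]; omega
        · rw [Fin.le_def]
          simp only [Fin.coe_castSucc]
          omega
      rw [wrd, dif_pos h, ← hsa, ins_succAbove, if_neg (by omega), wrd, dif_pos hin,
        Fin.coe_castSucc]

end MM

namespace MM
open Paper

lemma mem_Des_ins (p : Fin (n+1)) (τ : Equiv.Perm (Fin n)) (i : ℕ) :
    i ∈ Des (ins p τ) ↔
      (i ∈ Des τ ∧ i < (p : ℕ)) ∨ ((p : ℕ) < n ∧ i = (p : ℕ) + 1) ∨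
        ((i - 1) ∈ Des τ ∧ (p : ℕ) + 1 < i) := by
  have hp : (p : ℕ) ≤ n := Nat.lt_succ_iff.mp p.isLt
  simp only [Des, mem_filter, mem_Ioo]
  by_cases hi : 0 < i ∧ i < n + 1
  · obtain ⟨hi0, hin⟩ := hi
    rw [wrd_ins p τ i hin, wrd_ins p τ (i-1) (by omega)]
    rcases Nat.lt_trichotomy i (p : ℕ) with hlt | heq | hgt
    · rw [if_neg (by omega), if_pos hlt, if_neg (by omega), if_pos (by omega)]
      constructor
      · rintro ⟨_, hw⟩
        exact Or.inl ⟨⟨⟨hi0, by omega⟩, hw⟩, hlt⟩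
      · rintro (⟨⟨_, hw⟩, _⟩ | ⟨_, he⟩ | ⟨_, hgt'⟩)
        · exact ⟨⟨hi0, hin⟩, hw⟩
        · omega
        · omega
    · rw [if_pos heq]
      have hlt : (if i - 1 = (p:ℕ) then n else if i - 1 < (p:ℕ) then wrd τ (i-1) else wrd τ (i-1-1)) < n + 1 := by
        split
        · omega
        · split
          · exact Nat.lt_succ_of_lt (wrd_lt τ _ (by omega))
          · rcases Nat.lt_or_ge (i-1-1) n with hh | hh
            · exact Nat.lt_succ_of_lt (wrd_lt τ _ hh)
            · rw [wrd, dif_neg (by omega)]; omega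
      constructor
      · rintro ⟨_, hw⟩; omega
      · rintro (⟨⟨h1, _⟩, h2⟩ | ⟨_, he⟩ | ⟨_, hgt'⟩) <;> omega
    · rw [if_neg (by omega), if_neg (by omega)]
      rcases Nat.eq_or_lt_of_le (Nat.succ_le_of_lt hgt) with heq1 | hgt1
      · -- i = p + 1
        rw [if_pos (by omega)]
        have hw : wrd τ (i-1) < n := wrd_lt τ _ (by omega)
        constructor
        · intro _; exact Or.inr (Or.inl ⟨by omega, by omega⟩)
        · intro _; exact ⟨⟨hi0, hin⟩, by omega⟩
      · -- i > p + 1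
        rw [if_neg (by omega), if_neg (by omega)]
        constructor
        · rintro ⟨_, hw⟩
          exact Or.inr (Or.inr ⟨⟨⟨by omega, by omega⟩, hw⟩, hgt1⟩)
        · rintro (⟨⟨hm, _⟩, hl⟩ | ⟨_, he⟩ | ⟨⟨⟨_, _⟩, hw⟩, _⟩)
          · omega
          · omega
          · exact ⟨⟨hi0, hin⟩, hw⟩
  · constructor
    · rintro ⟨hm, _⟩; omega
    · rintro (⟨⟨hm, _⟩, _⟩ | ⟨hb, he⟩ | ⟨⟨hm, _⟩, hgt⟩) <;> omega

end MM

namespace MM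
open Paper

def g (τ : Equiv.Perm (Fin n)) (p : ℕ) : ℕ :=
  ((Des τ).filter (fun d => p < d)).card + (if p < n then p + 1 else 0) -
    (if p ∈ Des τ then p else 0)

lemma Des_ins (p : Fin (n+1)) (τ : Equiv.Perm (Fin n)) :
    Des (ins p τ) = ((Des τ).filter (fun d => d < (p : ℕ))) ∪
      ((if (p : ℕ) < n then {(p : ℕ) + 1} else (∅ : Finset ℕ)) ∪
        ((Des τ).filter (fun d => (p : ℕ) < d)).image (· + 1)) := by
  ext i
  rw [mem_Des_ins]
  simp only [mem_union, mem_filter, mem_image, mem_singleton]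
  constructor
  · rintro (⟨h1, h2⟩ | ⟨h1, h2⟩ | ⟨h1, h2⟩)
    · exact Or.inl ⟨h1, h2⟩
    · refine Or.inr (Or.inl ?_); rw [if_pos h1]; simpa using h2
    · exact Or.inr (Or.inr ⟨i - 1, ⟨h1, by omega⟩, by omega⟩)
  · rintro (⟨h1, h2⟩ | h | ⟨d, ⟨hd1, hd2⟩, hd3⟩)
    · exact Or.inl ⟨h1, h2⟩
    · refine Or.inr (Or.inl ?_)
      rcases Nat.lt_or_ge (p : ℕ) n with hn | hn
      · rw [if_pos hn] at h; simp at h; exact ⟨hn, h⟩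
      · rw [if_neg (by omega)] at h; simp at h
    · refine Or.inr (Or.inr ?_)
      constructor
      · have : i - 1 = d := by omega
        rw [this]; exact hd1
      · omega

lemma maj_ins (p : Fin (n+1)) (τ : Equiv.Perm (Fin n)) :
    maj (ins p τ) = maj τ + g τ (p : ℕ) := by
  classical
  have hDlt : ∀ d ∈ Des τ, 0 < d ∧ d < n := by
    intro d hd
    have := (mem_filter.mp hd).1
    exact mem_Ioo.mp this
  set A := (Des τ).filter (fun d => d < (p : ℕ)) with hA
  set B := (if (p : ℕ) < n then {(p : ℕ) + 1} else (∅ : Finset ℕ)) with hB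
  set C := ((Des τ).filter (fun d => (p : ℕ) < d)).image (· + 1) with hC
  have hdisjBC : Disjoint B C := by
    rw [disjoint_left]
    intro a haB haC
    simp only [hC, mem_image, mem_filter] at haC
    obtain ⟨d, ⟨_, hd⟩, rfl⟩ := haC
    rcases Nat.lt_or_ge (p : ℕ) n with hn | hn
    · rw [hB, if_pos hn, mem_singleton] at haB; omega
    · rw [hB, if_neg (by omega)] at haB; exact absurd haB (notMem_empty _)
  have hdisjA : Disjoint A (B ∪ C) := by
    rw [disjoint_left]
    intro a haA haBC
    have ha : a < (p : ℕ) := (mem_filter.mp haA).2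
    rcases mem_union.mp haBC with haB | haC
    · rcases Nat.lt_or_ge (p : ℕ) n with hn | hn
      · rw [hB, if_pos hn, mem_singleton] at haB; omega
      · rw [hB, if_neg (by omega)] at haB; exact absurd haB (notMem_empty _)
    · simp only [hC, mem_image, mem_filter] at haC
      obtain ⟨d, ⟨_, hd⟩, rfl⟩ := haC
      omega
  have hsum : maj (ins p τ) = (∑ i ∈ A, i) + ((∑ i ∈ B, i) + (∑ i ∈ C, i)) := by
    rw [maj, Des_ins, sum_union hdisjA, sum_union hdisjBC]
  have hBsum : (∑ i ∈ B, i) = if (p : ℕ) < n then (p : ℕ) + 1 else 0 := by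
    rcases Nat.lt_or_ge (p : ℕ) n with hn | hn
    · rw [hB, if_pos hn, if_pos hn, sum_singleton]
    · rw [hB, if_neg (by omega), if_neg (by omega), sum_empty]
  have hCsum : (∑ i ∈ C, i) =
      (∑ d ∈ (Des τ).filter (fun d => (p : ℕ) < d), d) +
        ((Des τ).filter (fun d => (p : ℕ) < d)).card := by
    rw [hC, sum_image (fun a _ b _ h => by omega)]
    rw [sum_add_distrib, sum_const, smul_eq_mul, mul_one]
  -- split maj τ in three pieces
  have hmaj : maj τ = (∑ i ∈ A, i) + (if (p : ℕ) ∈ Des τ then (p : ℕ) else 0)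
      + (∑ d ∈ (Des τ).filter (fun d => (p : ℕ) < d), d) := by
    rw [maj, ← Finset.sum_filter_add_sum_filter_not (Des τ) (fun d => d < (p : ℕ))]
    have hsplit : (Des τ).filter (fun d => ¬ d < (p : ℕ)) =
        ((Des τ).filter (fun d => d = (p : ℕ))) ∪ ((Des τ).filter (fun d => (p : ℕ) < d)) := by
      ext a
      simp only [mem_union, mem_filter]
      constructor
      · rintro ⟨h1, h2⟩
        rcases Nat.eq_or_lt_of_le (Nat.le_of_not_lt h2) with h | h
        · exact Or.inl ⟨h1, h.symm⟩
        · exact Or.inr ⟨h1, h⟩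
      · rintro (⟨h1, h2⟩ | ⟨h1, h2⟩) <;> exact ⟨h1, by omega⟩
    have hdisj : Disjoint ((Des τ).filter (fun d => d = (p : ℕ)))
        ((Des τ).filter (fun d => (p : ℕ) < d)) := by
      rw [disjoint_left]
      intro a h1 h2
      have := (mem_filter.mp h1).2
      have := (mem_filter.mp h2).2
      omega
    rw [hsplit, sum_union hdisj]
    have heq : (Des τ).filter (fun d => d = (p : ℕ)) =
        if (p : ℕ) ∈ Des τ then {(p : ℕ)} else ∅ := Finset.filter_eq' _ _
    have : (∑ i ∈ (Des τ).filter (fun d => d = (p : ℕ)), i) =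
        if (p : ℕ) ∈ Des τ then (p : ℕ) else 0 := by
      rw [heq]; split <;> simp
    rw [this]
    ring
  rw [hsum, hBsum, hCsum, hmaj, g]
  by_cases hmem : (p : ℕ) ∈ Des τ
  · have hlt : (p : ℕ) < n := (hDlt _ hmem).2
    rw [if_pos hmem] at hmaj ⊢
    rw [if_pos hlt]
    omega
  · rw [if_neg hmem] at hmaj ⊢
    split_ifs <;> omega

end MM

namespace MM
open Paper

variable (τ : Equiv.Perm (Fin n))

lemma Des_bounds : ∀ d ∈ Des τ, 0 < d ∧ d < n := fun d hd => mem_Ioo.mp (mem_filter.mp hd).1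

lemma g_at_n : g τ n = 0 := by
  have h1 : (Des τ).filter (fun d => n < d) = ∅ := by
    rw [filter_eq_empty_iff]
    intro d hd
    have := Des_bounds τ d hd
    omega
  have h2 : n ∉ Des τ := fun h => by have := Des_bounds τ n h; omega
  rw [g, h1, if_neg (lt_irrefl n), if_neg h2, card_empty]

lemma g_mem (p : ℕ) (hp : p ∈ Des τ) :
    g τ p = ((Des τ).filter (fun d => p < d)).card + 1 := by
  have hlt : p < n := (Des_bounds τ p hp).2
  rw [g, if_pos hlt, if_pos hp]
  omega

lemma g_mem_le (p : ℕ) (hp : p ∈ Des τ) : g τ p ≤ (Des τ).card := by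
  rw [g_mem τ p hp]
  have hss : (Des τ).filter (fun d => p < d) ⊂ Des τ := by
    refine ⟨filter_subset _ _, fun hsub => ?_⟩
    have := mem_filter.mp (hsub hp)
    omega
  exact Nat.succ_le_of_lt (card_lt_card hss)

def rle (p : ℕ) : ℕ := ((Finset.range (p+1)).filter (fun r => r ∉ Des τ)).card

lemma g_nonmem (p : ℕ) (hp : p ∉ Des τ) (hpn : p < n) :
    g τ p = (Des τ).card + rle τ p := by
  have hc : ((Des τ).filter (fun d => p < d)).card
      + ((Des τ).filter (fun d => ¬ p < d)).card = (Des τ).card :=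
    card_filter_add_card_filter_not _
  have hd : (Des τ).filter (fun d => ¬ p < d) = (Finset.range (p+1)).filter (fun r => r ∈ Des τ) := by
    ext a
    simp only [mem_filter, mem_range]
    constructor
    · rintro ⟨h1, h2⟩; exact ⟨by omega, h1⟩
    · rintro ⟨h1, h2⟩; exact ⟨h2, by omega⟩
  have hr : ((Finset.range (p+1)).filter (fun r => r ∈ Des τ)).card + rle τ p = p + 1 := by
    rw [rle, card_filter_add_card_filter_not, card_range]
  rw [hd] at hc
  rw [g, if_pos hpn, if_neg hp]
  omega

lemma rle_pos (p : ℕ) (hp : p ∉ Des τ) : 1 ≤ rle τ p := by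
  rw [rle, Nat.succ_le_iff, card_pos]
  exact ⟨p, mem_filter.mpr ⟨mem_range.mpr (by omega), hp⟩⟩

lemma rle_le (p : ℕ) (hpn : p < n) : (Des τ).card + rle τ p ≤ n := by
  have h1 : rle τ p ≤ ((Finset.range n).filter (fun r => r ∉ Des τ)).card := by
    apply card_le_card
    apply filter_subset_filter
    intro a ha
    rw [mem_range] at *
    omega
  have h2 : ((Finset.range n).filter (fun r => r ∈ Des τ)).card
      + ((Finset.range n).filter (fun r => r ∉ Des τ)).card = n := by
    rw [card_filter_add_card_filter_not, card_range]
  have h3 : (Finset.range n).filter (fun r => r ∈ Des τ) = Des τ := by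
    ext a
    simp only [mem_filter, mem_range]
    constructor
    · exact fun h => h.2
    · intro h; exact ⟨(Des_bounds τ a h).2, h⟩
  rw [h3] at h2
  omega

lemma g_le (p : ℕ) (hp : p ≤ n) : g τ p ≤ n := by
  rcases Nat.eq_or_lt_of_le hp with rfl | hlt
  · rw [g_at_n]; omega
  · by_cases hmem : p ∈ Des τ
    · have h1 := g_mem_le τ p hmem
      have h2 : (Des τ).card ≤ n := by
        have := card_le_card (fun d hd => mem_range.mpr (Des_bounds τ d hd).2 : Des τ ⊆ Finset.range n)
        rwa [card_range] at this
      omega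
    · rw [g_nonmem τ p hmem hlt]
      exact rle_le τ p hlt

lemma g_pos (p : ℕ) (hpn : p < n) : 1 ≤ g τ p := by
  by_cases hmem : p ∈ Des τ
  · rw [g_mem τ p hmem]; omega
  · rw [g_nonmem τ p hmem hpn]
    have := rle_pos τ p hmem
    omega

lemma g_ne {p p' : ℕ} (h : p < p') (hp' : p' ≤ n) : g τ p ≠ g τ p' := by
  rcases Nat.eq_or_lt_of_le hp' with rfl | hlt'
  · rw [g_at_n]
    have := g_pos τ p h
    omega
  · have hpn : p < n := by omega
    by_cases hm : p ∈ Des τ <;> by_cases hm' : p' ∈ Des τ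
    · rw [g_mem τ p hm, g_mem τ p' hm']
      have hss : (Des τ).filter (fun d => p' < d) ⊂ (Des τ).filter (fun d => p < d) := by
        constructor
        · intro a ha
          rw [mem_filter] at *
          exact ⟨ha.1, by omega⟩
        · intro hsub
          have hmem : p' ∈ (Des τ).filter (fun d => p < d) := mem_filter.mpr ⟨hm', h⟩
          have := (mem_filter.mp (hsub hmem)).2
          omega
      have := card_lt_card hss
      omega
    · rw [g_nonmem τ p' hm' hlt']
      have h1 := g_mem_le τ p hm
      have h2 := rle_pos τ p' hm'
      omega
    · rw [g_nonmem τ p hm hpn, g_mem τ p' hm']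
      have h1 := g_mem_le τ p' hm'
      have h2 := rle_pos τ p hm
      have h3 := g_mem τ p' hm'
      have h4 : g τ p' ≤ (Des τ).card := g_mem_le τ p' hm'
      rw [g_mem τ p' hm'] at h4
      omega
    · rw [g_nonmem τ p hm hpn, g_nonmem τ p' hm' hlt']
      have hss : (Finset.range (p+1)).filter (fun r => r ∉ Des τ)
          ⊂ (Finset.range (p'+1)).filter (fun r => r ∉ Des τ) := by
        constructor
        · apply filter_subset_filter
          intro a ha
          rw [mem_range] at *
          omega
        · intro hsub
          have hmem : p' ∈ (Finset.range (p'+1)).filter (fun r => r ∉ Des τ) :=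
            mem_filter.mpr ⟨mem_range.mpr (by omega), hm'⟩
          have := mem_range.mp (mem_filter.mp (hsub hmem)).1
          omega
      have := card_lt_card hss
      rw [rle, rle]
      omega

lemma g_image : (Finset.range (n+1)).image (g τ) = Finset.range (n+1) := by
  apply Finset.eq_of_subset_of_card_le
  · intro a ha
    obtain ⟨p, hp, rfl⟩ := mem_image.mp ha
    exact mem_range.mpr (Nat.lt_succ_of_le (g_le τ p (Nat.lt_succ_iff.mp (mem_range.mp hp))))
  · rw [card_range, Finset.card_image_of_injOn, card_range]
    intro p hp p' hp' heq
    rcases Nat.lt_trichotomy p p' with hlt | he | hgt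
    · exact absurd heq (g_ne τ hlt (by simpa using Nat.lt_succ_iff.mp (mem_range.mp hp')))
    · exact he
    · exact absurd heq.symm (g_ne τ hgt (Nat.lt_succ_iff.mp (mem_range.mp hp)))

lemma sum_g {R : Type*} [CommRing R] (q : R) :
    (∑ p ∈ Finset.range (n+1), q ^ (g τ p)) = ∑ j ∈ Finset.range (n+1), q ^ j := by
  have hinj : Set.InjOn (g τ) (Finset.range (n+1)) := by
    intro p hp p' hp' heq
    simp only [coe_range, Set.mem_Iio] at hp hp'
    rcases Nat.lt_trichotomy p p' with hlt | he | hgt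
    · exact absurd heq (g_ne τ hlt (Nat.lt_succ_iff.mp hp'))
    · exact he
    · exact absurd heq.symm (g_ne τ hgt (Nat.lt_succ_iff.mp hp))
  calc (∑ p ∈ Finset.range (n+1), q ^ (g τ p))
      = ∑ j ∈ (Finset.range (n+1)).image (g τ), q ^ j := (Finset.sum_image (fun x hx y hy => hinj (by simpa using hx) (by simpa using hy))).symm
    _ = ∑ j ∈ Finset.range (n+1), q ^ j := by rw [g_image]

end MM

namespace MM
open Paper

lemma ins_eq_last_iff (p : Fin (n+1)) (τ : Equiv.Perm (Fin n)) (a : Fin (n+1)) :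
    ins p τ a = Fin.last n ↔ a = p := by
  constructor
  · intro h
    by_contra hne
    obtain ⟨j, rfl⟩ := Fin.exists_succAbove_eq (hne : a ≠ p)
    rw [ins_succAbove] at h
    exact Fin.ne_last_of_lt (Fin.castSucc_lt_last _) h
  · rintro rfl; exact ins_self _ _

lemma inv_ins (p : Fin (n+1)) (τ : Equiv.Perm (Fin n)) :
    inv (ins p τ) = inv τ + (n - (p : ℕ)) := by
  classical
  set σ := ins p τ with hσ
  set S := Finset.univ.filter
    (fun q : Fin (n+1) × Fin (n+1) => q.1 < q.2 ∧ σ q.2 < σ q.1) with hS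
  have hsplit : (S.filter (fun q => q.1 = p)).card + (S.filter (fun q => ¬ q.1 = p)).card
      = S.card := card_filter_add_card_filter_not _
  have hIoi : (Finset.Ioi p).card = n - (p : ℕ) := by
    rw [Fin.card_Ioi]
    omega
  have h1 : (S.filter (fun q => q.1 = p)).card = n - (p : ℕ) := by
    rw [← hIoi]
    refine Finset.card_bij' (fun q _ => q.2) (fun j _ => ((p, j) : Fin (n+1) × Fin (n+1))) ?_ ?_ ?_ ?_
    · rintro ⟨a, b⟩ hq
      simp only [hS, mem_filter, mem_univ, true_and] at hq
      obtain ⟨⟨hab, _⟩, rfl⟩ := hq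
      exact mem_Ioi.mpr hab
    · intro j hj
      rw [mem_Ioi] at hj
      simp only [hS, mem_filter, mem_univ, true_and]
      refine ⟨⟨hj, ?_⟩, trivial⟩
      rw [ins_self]
      apply lt_of_le_of_ne (Fin.le_last _)
      rw [ne_eq, ins_eq_last_iff]
      exact fun h => absurd h (ne_of_gt hj)
    · rintro ⟨a, b⟩ hq
      simp only [hS, mem_filter] at hq
      obtain ⟨_, rfl⟩ := hq
      rfl
    · intro j hj; rfl
  have h2 : (S.filter (fun q => ¬ q.1 = p)).card = inv τ := by
    rw [inv]
    symm
    apply Finset.card_bij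
      (i := fun q _ => ((p.succAbove q.1, p.succAbove q.2) : Fin (n+1) × Fin (n+1)))
    · rintro ⟨a, b⟩ hq
      simp only [mem_filter, mem_univ, true_and] at hq
      simp only [hS, mem_filter, mem_univ, true_and]
      refine ⟨⟨Fin.succAbove_lt_succAbove_iff.mpr hq.1, ?_⟩, Fin.succAbove_ne p a⟩
      rw [hσ, ins_succAbove, ins_succAbove]
      exact Fin.castSucc_lt_castSucc_iff.mpr hq.2
    · rintro ⟨a, b⟩ ha ⟨c, d⟩ hc h
      simp only [Prod.mk.injEq] at h ⊢
      exact ⟨Fin.succAbove_right_injective h.1, Fin.succAbove_right_injective h.2⟩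
    · rintro ⟨a, b⟩ hq
      simp only [hS, mem_filter, mem_univ, true_and] at hq
      obtain ⟨⟨hab, hv⟩, hne⟩ := hq
      have hbne : b ≠ p := by
        rintro rfl
        rw [hσ, ins_self] at hv
        exact absurd hv (not_lt.mpr (Fin.le_last _))
      obtain ⟨a', rfl⟩ := Fin.exists_succAbove_eq (hne : a ≠ p)
      obtain ⟨b', rfl⟩ := Fin.exists_succAbove_eq hbne
      refine ⟨(a', b'), ?_, rfl⟩
      simp only [mem_filter, mem_univ, true_and]
      rw [hσ, ins_succAbove, ins_succAbove] at hv
      exact ⟨Fin.succAbove_lt_succAbove_iff.mp hab, Fin.castSucc_lt_castSucc_iff.mp hv⟩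
  rw [inv, ← hS, ← hsplit, h1, h2]
  ring

end MM

namespace MM
open Paper

variable {R : Type*} [CommRing R]

lemma sum_pow_maj (q : R) : ∀ n : ℕ, (∑ σ : Equiv.Perm (Fin n), q ^ maj σ) =
    ∏ i ∈ Finset.range n, ∑ j ∈ Finset.range (i + 1), q ^ j := by
  intro n
  induction n with
  | zero =>
    rw [Finset.range_zero, Finset.prod_empty]
    have : ∀ σ : Equiv.Perm (Fin 0), maj σ = 0 := by
      intro σ
      rw [maj, Des]
      simp
    rw [Finset.sum_congr rfl (fun σ _ => by rw [this σ, pow_zero])]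
    simp
  | succ n ih =>
    have hb := ins_bijective (n := n)
    rw [← Fintype.sum_bijective _ hb _ _ (fun pt => rfl)]
    rw [Fintype.sum_prod_type]
    have hterm : ∀ (p : Fin (n+1)) (τ : Equiv.Perm (Fin n)),
        q ^ maj (ins p τ) = q ^ maj τ * q ^ g τ (p : ℕ) := by
      intro p τ
      rw [maj_ins, pow_add]
    simp only [hterm]
    rw [Finset.sum_comm]
    have hin : ∀ τ : Equiv.Perm (Fin n),
        (∑ p : Fin (n+1), q ^ maj τ * q ^ g τ (p : ℕ)) =
          q ^ maj τ * ∑ j ∈ Finset.range (n+1), q ^ j := by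
      intro τ
      rw [← Finset.mul_sum]
      congr 1
      rw [← sum_g τ q]
      exact Fin.sum_univ_eq_sum_range (fun p => q ^ g τ p) (n+1)
    rw [Finset.sum_congr rfl (fun τ _ => hin τ), ← Finset.sum_mul, ih,
      Finset.prod_range_succ]

lemma sum_pow_inv (q : R) : ∀ n : ℕ, (∑ σ : Equiv.Perm (Fin n), q ^ inv σ) =
    ∏ i ∈ Finset.range n, ∑ j ∈ Finset.range (i + 1), q ^ j := by
  intro n
  induction n with
  | zero =>
    rw [Finset.range_zero, Finset.prod_empty]
    have : ∀ σ : Equiv.Perm (Fin 0), inv σ = 0 := by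
      intro σ
      rw [inv, Finset.card_eq_zero]
      ext ⟨a, b⟩
      exact a.elim0
    rw [Finset.sum_congr rfl (fun σ _ => by rw [this σ, pow_zero])]
    simp
  | succ n ih =>
    have hb := ins_bijective (n := n)
    rw [← Fintype.sum_bijective _ hb _ _ (fun pt => rfl)]
    rw [Fintype.sum_prod_type]
    have hterm : ∀ (p : Fin (n+1)) (τ : Equiv.Perm (Fin n)),
        q ^ inv (ins p τ) = q ^ (n - (p : ℕ)) * q ^ inv τ := by
      intro p τ
      rw [inv_ins, pow_add, mul_comm]
    simp only [hterm]
    have hrefl : (∑ p : Fin (n+1), q ^ (n - (p : ℕ))) = ∑ j ∈ Finset.range (n+1), q ^ j := by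
      rw [Fin.sum_univ_eq_sum_range (fun p => q ^ (n - p)) (n+1)]
      have := Finset.sum_range_reflect (fun j => q ^ j) (n+1)
      simp only [Nat.add_sub_cancel] at this
      exact this
    calc (∑ p : Fin (n+1), ∑ τ : Equiv.Perm (Fin n), q ^ (n - (p : ℕ)) * q ^ inv τ)
        = (∑ p : Fin (n+1), q ^ (n - (p : ℕ))) * (∑ τ : Equiv.Perm (Fin n), q ^ inv τ) := by
          rw [Finset.sum_mul]
          exact Finset.sum_congr rfl fun p _ => by rw [Finset.mul_sum]
      _ = (∏ i ∈ Finset.range n, ∑ j ∈ Finset.range (i + 1), q ^ j)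
            * ∑ j ∈ Finset.range (n+1), q ^ j := by rw [hrefl, ih, mul_comm]
      _ = _ := by rw [Finset.prod_range_succ]

end MM


end MMproof

/-- MacMahon: `maj` and `inv` are equidistributed on `S_n`, with common generating
function the `q`-factorial `[n]_q! = ∏_{i=1}^n (1-q^i)/(1-q)`. -/
theorem maj_inv_equidistributed (n : ℕ) :
    (∑ σ : Equiv.Perm (Fin n), (Polynomial.X : Polynomial ℤ) ^ Paper.maj σ) =
      (∑ σ : Equiv.Perm (Fin n), (Polynomial.X : Polynomial ℤ) ^ Paper.inv σ) ∧
    (∑ σ : Equiv.Perm (Fin n), (Polynomial.X : Polynomial ℤ) ^ Paper.inv σ) =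
      ∏ i ∈ Finset.range n, ∑ j ∈ Finset.range (i + 1), (Polynomial.X : Polynomial ℤ) ^ j := by
  refine ⟨?_, MM.sum_pow_inv _ n⟩
  rw [MM.sum_pow_inv _ n, MM.sum_pow_maj _ n]
end

section
/- The major code is a bijection from S_n to the set of sub-diagonal sequences, and the sum of its entries equals the major index: ∑_{i=1}^n m_i(σ) = maj(σ). -/
open Finset

namespace MC
open List Finset Paper

def desF (l : List ℕ) : Finset ℕ :=
  (Finset.range (l.length - 1)).filter fun t => l.getD (t+1) 0 < l.getD t 0

def delta (w : List ℕ) (k : ℕ) : ℕ :=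
  (if 1 ≤ k ∧ k - 1 ∉ desF w then k else 0) + ((desF w).filter fun t => k ≤ t).card

lemma majL_insert (l₁ l₂ : List ℕ) (a : ℕ) (h₁ : ∀ x ∈ l₁, a < x) (h₂ : ∀ x ∈ l₂, a < x) :
    majL (l₁ ++ a :: l₂) = majL (l₁ ++ l₂) + delta (l₁ ++ l₂) l₁.length := by
  set u := l₁ ++ a :: l₂ with hu
  set w := l₁ ++ l₂ with hw
  set k := l₁.length with hkdef
  set fw : ℕ → ℕ := fun t => if w.getD (t+1) 0 < w.getD t 0 then t+1 else 0 with hfw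
  set Fu : ℕ → ℕ := fun t => if u.getD (t+1) 0 < u.getD t 0 then t+1 else 0 with hFu
  have hkL : k ≤ w.length := by rw [hw, hkdef, List.length_append]; omega
  have hulen : u.length = w.length + 1 := by
    rw [hu, hw, List.length_append, List.length_append, List.length_cons]; omega
  have hw_elem : ∀ t, t < w.length → a < w.getD t 0 := by
    intro t ht
    rw [List.getD_eq_getElem _ _ ht]
    have hm : w[t] ∈ l₁ ++ l₂ := List.getElem_mem (l := w) ht
    rcases List.mem_append.1 hm with h | h
    · exact h₁ _ h
    · exact h₂ _ h
  have hu_lt : ∀ t, t < k → u.getD t 0 = w.getD t 0 := by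
    intro t ht
    rw [hu, hw, List.getD_append _ _ _ _ ht, List.getD_append _ _ _ _ ht]
  have hu_k : u.getD k 0 = a := by
    rw [hu, List.getD_append_right _ _ _ _ le_rfl, Nat.sub_self, List.getD_cons_zero]
  have hu_gt : ∀ t, k < t → u.getD t 0 = w.getD (t-1) 0 := by
    intro t ht
    rw [hu, hw, List.getD_append_right _ _ _ _ (le_of_lt ht),
        List.getD_append_right _ _ _ _ (by omega)]
    rw [show t - k = (t - 1 - k) + 1 by omega, List.getD_cons_succ]
  have hmemD : ∀ t, t ∈ desF w ↔ (t < w.length - 1 ∧ w.getD (t+1) 0 < w.getD t 0) := by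
    intro t; simp [desF, Finset.mem_filter, Finset.mem_range]
  have h1 : majL u = ∑ t ∈ Finset.range w.length, Fu t := by
    rw [majL, hulen, Nat.add_sub_cancel]
  have hCzero : k = w.length → ((desF w).filter fun t => k ≤ t) = ∅ := by
    intro hkw
    apply Finset.eq_empty_of_forall_notMem
    intro t ht
    rw [Finset.mem_filter] at ht
    have := (hmemD t).1 ht.1
    omega
  have hset : ((desF w).filter fun t => k ≤ t)
      = (Finset.Ico k (w.length-1)).filter (fun t => w.getD (t+1) 0 < w.getD t 0) := by
    ext t
    simp only [Finset.mem_filter, Finset.mem_Ico, hmemD t]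
    tauto
  have hB : ∑ t ∈ Finset.Ico k w.length, Fu t
      = (∑ s ∈ Finset.Ico k (w.length - 1), fw s) + ((desF w).filter fun t => k ≤ t).card := by
    rcases eq_or_lt_of_le hkL with hkw | hkw
    · rw [hCzero hkw, Finset.card_empty, Finset.Ico_eq_empty (by omega),
        Finset.Ico_eq_empty (by omega), Finset.sum_empty, Finset.sum_empty]
      rfl
    · have hL1 : w.length - 1 + 1 = w.length := by omega
      rw [Finset.sum_eq_sum_Ico_succ_bot hkw]
      have hFuk : Fu k = 0 := by
        simp only [hFu]
        rw [hu_gt (k+1) (by omega), Nat.add_sub_cancel, hu_k, if_neg]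
        exact not_lt_of_gt (hw_elem k hkw)
      rw [hFuk, zero_add]
      rw [show Finset.Ico (k+1) w.length = Finset.map (addRightEmbedding 1) (Finset.Ico k (w.length - 1)) by
        rw [Finset.map_add_right_Ico, hL1]]
      rw [Finset.sum_map]
      have hterm : ∀ s ∈ Finset.Ico k (w.length - 1),
          Fu (addRightEmbedding 1 s) = fw s + (if w.getD (s+1) 0 < w.getD s 0 then 1 else 0) := by
        intro s hs
        rw [Finset.mem_Ico] at hs
        simp only [hFu, hfw, addRightEmbedding_apply]
        rw [hu_gt (s+1+1) (by omega), hu_gt (s+1) (by omega)]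
        simp only [Nat.add_sub_cancel]
        by_cases hc : w.getD (s+1) 0 < w.getD s 0
        · rw [if_pos hc, if_pos hc, if_pos hc]
        · rw [if_neg hc, if_neg hc, if_neg hc]
      rw [Finset.sum_congr rfl hterm, Finset.sum_add_distrib]
      congr 1
      rw [hset]
      exact (Finset.card_filter _ _).symm
  have hA : ∑ t ∈ Finset.range k, Fu t
      = (∑ t ∈ Finset.range (k-1), fw t) + (if 1 ≤ k then k else 0) := by
    rcases Nat.eq_zero_or_pos k with hk0 | hk1
    · simp [hk0]
    · rw [if_pos (show 1 ≤ k by omega)]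
      rw [show k = (k-1) + 1 by omega, Finset.sum_range_succ]
      congr 1
      · apply Finset.sum_congr rfl
        intro t ht
        rw [Finset.mem_range] at ht
        simp only [hFu, hfw]
        rw [hu_lt (t+1) (by omega), hu_lt t (by omega)]
      · simp only [hFu]
        rw [show k - 1 + 1 = k by omega, hu_k, hu_lt (k-1) (by omega),
          if_pos (hw_elem (k-1) (by omega))]
  have hMW : majL w = (∑ t ∈ Finset.range (k-1), fw t) + (∑ s ∈ Finset.Ico k (w.length - 1), fw s)
      + (if k - 1 ∈ desF w ∧ 1 ≤ k then k else 0) := by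
    rcases Nat.eq_zero_or_pos k with hk0 | hk1
    · rw [if_neg (by rintro ⟨-, h⟩; omega), hk0]
      rw [show (0:ℕ) - 1 = 0 from rfl, Finset.range_zero, Finset.sum_empty, zero_add, add_zero,
        majL, Finset.range_eq_Ico]
    · rcases eq_or_lt_of_le hkL with hkw | hkw
      · have hne : k - 1 ∉ desF w := by
          intro hc; have := (hmemD _).1 hc; omega
        rw [if_neg (by tauto), Finset.Ico_eq_empty (by omega), Finset.sum_empty, add_zero, add_zero]
        rw [majL, hkw]
      · have hsplit : Finset.range (w.length - 1)
            = Finset.Ico 0 (k-1) ∪ Finset.Ico (k-1) (w.length - 1) := by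
          rw [Finset.range_eq_Ico, Finset.Ico_union_Ico_eq_Ico (by omega) (by omega)]
        rw [majL]
        rw [show (∑ t ∈ Finset.range (w.length - 1),
              if w.getD (t + 1) 0 < w.getD t 0 then t + 1 else 0)
            = ∑ t ∈ Finset.range (w.length - 1), fw t from rfl]
        rw [hsplit, Finset.sum_union (by
          apply Finset.Ico_disjoint_Ico_consecutive)]
        rw [Finset.sum_eq_sum_Ico_succ_bot (show k - 1 < w.length - 1 by omega)]
        rw [show Finset.Ico (k-1+1) (w.length-1) = Finset.Ico k (w.length-1) by
          rw [show k-1+1 = k by omega]]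
        rw [← Finset.range_eq_Ico]
        have hk1' : k - 1 + 1 = k := by omega
        have hfwk : fw (k-1) = (if k - 1 ∈ desF w ∧ 1 ≤ k then k else 0) := by
          simp only [hfw]
          rw [hk1']
          by_cases hc : w.getD k 0 < w.getD (k-1) 0
          · rw [if_pos hc, if_pos ⟨(hmemD _).2 ⟨by omega, by rw [hk1']; exact hc⟩, by omega⟩]
          · rw [if_neg hc, if_neg]
            rintro ⟨hm, -⟩
            have hc2 := ((hmemD _).1 hm).2
            rw [hk1'] at hc2
            exact hc hc2
        rw [hfwk]
        ring
  have hfin : majL u = (∑ t ∈ Finset.range k, Fu t) + (∑ t ∈ Finset.Ico k w.length, Fu t) := by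
    rw [h1, Finset.range_eq_Ico,
      ← Finset.sum_Ico_consecutive _ (Nat.zero_le k) hkL, ← Finset.range_eq_Ico]
  rw [hfin, hA, hB, hMW, delta]
  by_cases hk1 : 1 ≤ k
  · by_cases hmem : k - 1 ∈ desF w
    · rw [if_pos hk1, if_pos ⟨hmem, hk1⟩, if_neg (by tauto)]
      ring
    · rw [if_pos hk1, if_neg (by tauto), if_pos ⟨hk1, hmem⟩]
      ring
  · rw [if_neg hk1, if_neg (by tauto), if_neg (by tauto)]
    ring

def Acard (w : List ℕ) (m : ℕ) : ℕ := ((desF w).filter fun t => m ≤ t).card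
def Bcard (w : List ℕ) (m : ℕ) : ℕ := ((desF w).filter fun t => t < m).card

lemma desF_mem {w : List ℕ} {t : ℕ} (h : t ∈ desF w) : t < w.length - 1 := by
  simp only [desF, Finset.mem_filter, Finset.mem_range] at h; exact h.1

lemma delta_eq (w : List ℕ) (m : ℕ) :
    delta w m = (if 1 ≤ m ∧ m - 1 ∉ desF w then m else 0) + Acard w m := rfl

lemma AB (w : List ℕ) (m : ℕ) : Acard w m + Bcard w m = (desF w).card := by
  rw [Acard, Bcard]
  have := Finset.card_filter_add_card_filter_not (s := desF w) (p := fun t => m ≤ t)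
  simpa [not_le] using this

lemma B_le (w : List ℕ) (m : ℕ) : Bcard w m ≤ m := by
  rw [Bcard]
  calc ((desF w).filter fun t => t < m).card ≤ (Finset.range m).card := by
        apply Finset.card_le_card
        intro t ht
        rw [Finset.mem_filter] at ht
        rw [Finset.mem_range]
        exact ht.2
    _ = m := Finset.card_range m

lemma rise_val {w : List ℕ} {m : ℕ} (hm : ¬(1 ≤ m ∧ m - 1 ∈ desF w)) :
    delta w m = m + Acard w m := by
  rw [delta_eq]
  by_cases h0 : 1 ≤ m
  · rw [if_pos ⟨h0, fun hc => hm ⟨h0, hc⟩⟩]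
  · rw [if_neg (by tauto)]
    omega

lemma desc_val {w : List ℕ} {m : ℕ} (hm : 1 ≤ m ∧ m - 1 ∈ desF w) :
    delta w m = Acard w m := by
  rw [delta_eq, if_neg (by tauto), zero_add]

lemma desc_lt {w : List ℕ} {m : ℕ} (hm : 1 ≤ m ∧ m - 1 ∈ desF w) :
    Acard w m < (desF w).card := by
  apply Finset.card_lt_card
  rw [Finset.ssubset_iff_of_subset (Finset.filter_subset _ _)]
  exact ⟨m - 1, hm.2, by rw [Finset.mem_filter]; rintro ⟨-, hc⟩; omega⟩

lemma rise_ge {w : List ℕ} {m : ℕ} (hm : ¬(1 ≤ m ∧ m - 1 ∈ desF w)) :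
    (desF w).card ≤ delta w m := by
  rw [rise_val hm]
  have h1 := AB w m
  have h2 := B_le w m
  omega

lemma B_mono {w : List ℕ} {m m' : ℕ} (hlt : m < m') (hm' : m' - 1 ∉ desF w) :
    Bcard w m' ≤ Bcard w m + (m' - 1 - m) := by
  rw [Bcard, Bcard]
  have hsub : ((desF w).filter fun t => t < m') ⊆
      ((desF w).filter fun t => t < m) ∪ Finset.Ico m (m' - 1) := by
    intro t ht
    rw [Finset.mem_filter] at ht
    rw [Finset.mem_union, Finset.mem_filter, Finset.mem_Ico]
    have htk : t ≠ m' - 1 := by rintro rfl; exact hm' ht.1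
    by_cases htl : t < m
    · exact Or.inl ⟨ht.1, htl⟩
    · exact Or.inr (by omega)
  have h1 := Finset.card_le_card hsub
  have h2 := Finset.card_union_le ((desF w).filter fun t => t < m) (Finset.Ico m (m' - 1))
  rw [Nat.card_Ico] at h2
  omega

lemma delta_ne {w : List ℕ} {k k' : ℕ} (hlt : k < k') : delta w k ≠ delta w k' := by
  by_cases c1 : 1 ≤ k ∧ k - 1 ∈ desF w
  · by_cases c2 : 1 ≤ k' ∧ k' - 1 ∈ desF w
    · -- both descents: Acard strictly decreasing
      rw [desc_val c1, desc_val c2]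
      have : Acard w k' < Acard w k := by
        apply Finset.card_lt_card
        rw [Finset.ssubset_iff_of_subset]
        · refine ⟨k' - 1, ?_, ?_⟩
          · rw [Finset.mem_filter]; exact ⟨c2.2, by omega⟩
          · rw [Finset.mem_filter]; rintro ⟨-, hc⟩; omega
        · intro t ht
          rw [Finset.mem_filter] at ht ⊢
          exact ⟨ht.1, by omega⟩
      omega
    · rw [desc_val c1]
      have h1 := desc_lt c1
      have h2 := rise_ge c2
      omega
  · by_cases c2 : 1 ≤ k' ∧ k' - 1 ∈ desF w
    · rw [desc_val c2]
      have h1 := desc_lt c2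
      have h2 := rise_ge c1
      omega
    · rw [rise_val c1, rise_val c2]
      have hm' : k' - 1 ∉ desF w := by
        intro hc; exact c2 ⟨by omega, hc⟩
      have h1 := B_mono hlt hm'
      have h2 := AB w k
      have h3 := AB w k'
      have h4 := B_le w k
      omega

lemma delta_le {w : List ℕ} {k : ℕ} (hk : k ≤ w.length) : delta w k ≤ w.length := by
  have hsub : ((desF w).filter fun t => k ≤ t) ⊆ Finset.Ico k (w.length - 1) := by
    intro t ht
    rw [Finset.mem_filter] at ht
    rw [Finset.mem_Ico]
    exact ⟨ht.2, desF_mem ht.1⟩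
  have hcard := Finset.card_le_card hsub
  rw [Nat.card_Ico] at hcard
  have hite : (if 1 ≤ k ∧ k - 1 ∉ desF w then k else 0) ≤ k := by split <;> omega
  rw [delta_eq]
  rw [Acard]
  omega

lemma delta_inj {w : List ℕ} {k k' : ℕ} (h : delta w k = delta w k') : k = k' := by
  rcases lt_trichotomy k k' with hlt | heq | hlt
  · exact absurd h (delta_ne hlt)
  · exact heq
  · exact absurd h.symm (delta_ne hlt)

lemma delta_surj (w : List ℕ) {v : ℕ} (hv : v ≤ w.length) :
    ∃ k, k ≤ w.length ∧ delta w k = v := by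
  have himg : (Finset.range (w.length + 1)).image (delta w) = Finset.range (w.length + 1) := by
    apply Finset.eq_of_subset_of_card_le
    · intro x hx
      rw [Finset.mem_image] at hx
      obtain ⟨k, hk, rfl⟩ := hx
      rw [Finset.mem_range] at hk
      rw [Finset.mem_range]
      have := delta_le (w := w) (k := k) (by omega)
      omega
    · rw [Finset.card_image_of_injOn (fun a _ b _ h => delta_inj h), Finset.card_range]
  have : v ∈ (Finset.range (w.length + 1)).image (delta w) := by
    rw [himg, Finset.mem_range]; omega
  rw [Finset.mem_image] at this
  obtain ⟨k, hk, hdk⟩ := this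
  rw [Finset.mem_range] at hk
  exact ⟨k, by omega, hdk⟩


variable {n : ℕ}

def W (σ : Equiv.Perm (Fin n)) (i : ℕ) : List ℕ :=
  (word σ).filter fun x => decide (i + 1 ≤ x)

lemma Mc_eq (σ : Equiv.Perm (Fin n)) (i : ℕ) :
    Mc σ i = majL (W σ i) - majL (W σ (i+1)) := rfl

lemma word_length (σ : Equiv.Perm (Fin n)) : (word σ).length = n := by
  rw [word, List.length_ofFn]

lemma word_nodup (σ : Equiv.Perm (Fin n)) : (word σ).Nodup := by
  rw [word, List.nodup_ofFn]
  intro a b hab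
  simp only at hab
  exact σ.injective (Fin.ext (by omega))

lemma word_mem (σ : Equiv.Perm (Fin n)) (x : ℕ) : x ∈ word σ ↔ 1 ≤ x ∧ x ≤ n := by
  rw [word, List.mem_ofFn]
  constructor
  · rintro ⟨i, rfl⟩
    have := (σ i).isLt
    omega
  · rintro ⟨h1, h2⟩
    refine ⟨σ.symm ⟨x - 1, by omega⟩, ?_⟩
    simp only [Equiv.apply_symm_apply]
    omega

lemma word_getD (σ : Equiv.Perm (Fin n)) {t : ℕ} (ht : t < n) :
    (word σ).getD t 0 = (σ ⟨t, ht⟩ : ℕ) + 1 := by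
  have hlt : t < (word σ).length := by rw [word_length]; exact ht
  rw [List.getD_eq_getElem _ _ hlt]
  simp only [word, List.getElem_ofFn]

lemma W_nodup (σ : Equiv.Perm (Fin n)) (i : ℕ) : (W σ i).Nodup :=
  (word_nodup σ).filter _

lemma W_toFinset (σ : Equiv.Perm (Fin n)) (i : ℕ) :
    (W σ i).toFinset = Finset.Icc (i+1) n := by
  ext x
  rw [List.mem_toFinset, W, List.mem_filter, word_mem, Finset.mem_Icc, decide_eq_true_eq]
  omega

lemma W_length (σ : Equiv.Perm (Fin n)) (i : ℕ) : (W σ i).length = n - i := by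
  rw [← List.toFinset_card_of_nodup (W_nodup σ i), W_toFinset, Nat.card_Icc]
  omega

lemma W_nil (σ : Equiv.Perm (Fin n)) {i : ℕ} (hi : n ≤ i) : W σ i = [] := by
  have h := W_length σ i
  rw [Nat.sub_eq_zero_of_le hi] at h
  exact List.length_eq_zero_iff.1 h

lemma majL_nil : majL ([] : List ℕ) = 0 := by simp [majL]

lemma W_step (σ : Equiv.Perm (Fin n)) {i : ℕ} (hi : i < n) :
    ∃ k, k ≤ n - (i+1) ∧
      W σ i = (W σ (i+1)).take k ++ (i+1) :: (W σ (i+1)).drop k ∧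
      majL (W σ i) = majL (W σ (i+1)) + delta (W σ (i+1)) k := by
  have hmem : (i+1) ∈ W σ i := by
    rw [W, List.mem_filter, word_mem]
    exact ⟨⟨by omega, by omega⟩, by simp⟩
  obtain ⟨s, t, hst⟩ := List.append_of_mem hmem
  have hcount : (W σ i).count (i+1) = 1 := by
    rw [W, List.count_filter (by simp)]
    exact List.count_eq_one_of_mem (word_nodup σ) (by rw [word_mem]; omega)
  rw [hst, List.count_append, List.count_cons_self] at hcount
  have hs : (i+1) ∉ s := by rw [← List.count_eq_zero (a := i+1)]; omega
  have ht : (i+1) ∉ t := by rw [← List.count_eq_zero (a := i+1)]; omega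
  have hsgt : ∀ x ∈ s, i + 1 < x := by
    intro x hx
    have hx' : x ∈ W σ i := by rw [hst]; exact List.mem_append.2 (Or.inl hx)
    have h2 := List.of_mem_filter hx'
    rw [decide_eq_true_eq] at h2
    rcases Nat.lt_or_ge (i+1) x with h | h
    · exact h
    · exfalso
      have hxe : x = i + 1 := by omega
      rw [hxe] at hx
      exact hs hx
  have htgt : ∀ x ∈ t, i + 1 < x := by
    intro x hx
    have hx' : x ∈ W σ i := by
      rw [hst]; exact List.mem_append.2 (Or.inr (List.mem_cons_of_mem _ hx))
    have h2 := List.of_mem_filter hx'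
    rw [decide_eq_true_eq] at h2
    rcases Nat.lt_or_ge (i+1) x with h | h
    · exact h
    · exfalso
      have hxe : x = i + 1 := by omega
      rw [hxe] at hx
      exact ht hx
  have hW1 : W σ (i+1) = s ++ t := by
    have h1 : W σ (i+1) = (W σ i).filter (fun x => decide (i+2 ≤ x)) := by
      rw [W, W, List.filter_filter]
      apply List.filter_congr
      intro x _
      by_cases h : i + 2 ≤ x
      · simp [h, show i + 1 ≤ x by omega]
      · simp [h]
    rw [h1, hst, List.filter_append, List.filter_cons_of_neg (by simp),
      List.filter_eq_self.2 (fun x hx => by rw [decide_eq_true_eq]; have := hsgt x hx; omega),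
      List.filter_eq_self.2 (fun x hx => by rw [decide_eq_true_eq]; have := htgt x hx; omega)]
  refine ⟨s.length, ?_, ?_, ?_⟩
  · have := W_length σ (i+1)
    rw [hW1, List.length_append] at this
    omega
  · rw [hW1, List.take_left, List.drop_left, hst]
  · rw [hst, hW1]
    exact majL_insert s t (i+1) (fun x hx => hsgt x hx) (fun x hx => htgt x hx)

lemma Mc_spec (σ : Equiv.Perm (Fin n)) {i : ℕ} (hi : i < n) :
    ∃ k, k ≤ n - (i+1) ∧ Mc σ i = delta (W σ (i+1)) k ∧
      W σ i = (W σ (i+1)).take k ++ (i+1) :: (W σ (i+1)).drop k := by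
  obtain ⟨k, hk, hw, hm⟩ := W_step σ hi
  exact ⟨k, hk, by rw [Mc_eq, hm]; omega, hw⟩

lemma Mc_le {σ : Equiv.Perm (Fin n)} {i : ℕ} (hi : i < n) : Mc σ i ≤ n - (i+1) := by
  obtain ⟨k, hk, hm, -⟩ := Mc_spec σ hi
  rw [hm]
  have h := delta_le (w := W σ (i+1)) (k := k) (by rw [W_length]; exact hk)
  rw [W_length] at h
  exact h

lemma Mc_zero (σ : Equiv.Perm (Fin n)) {i : ℕ} (hi : n ≤ i) : Mc σ i = 0 := by
  rw [Mc_eq, W_nil σ hi, W_nil σ (by omega), majL_nil]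

lemma sum_Mc (σ : Equiv.Perm (Fin n)) : ∑ i ∈ Finset.range n, Mc σ i = majL (word σ) := by
  have key : ∀ m j, j + m = n → ∑ i ∈ Finset.Ico j n, Mc σ i = majL (W σ j) := by
    intro m
    induction m with
    | zero =>
      intro j hj
      have hjn : j = n := by omega
      subst hjn
      rw [Finset.Ico_self, Finset.sum_empty, W_nil σ le_rfl, majL_nil]
    | succ m ih =>
      intro j hj
      have hjn : j < n := by omega
      rw [Finset.sum_eq_sum_Ico_succ_bot hjn, ih (j+1) (by omega)]
      obtain ⟨k, -, -, hmaj⟩ := W_step σ hjn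
      rw [Mc_eq]
      omega
  have h0 := key n 0 (by omega)
  rw [Finset.range_eq_Ico, h0, W, List.filter_eq_self.2]
  intro x hx
  rw [decide_eq_true_eq]
  have := (word_mem σ x).1 hx
  omega

lemma majL_word (σ : Equiv.Perm (Fin n)) : majL (word σ) = maj σ := by
  rw [maj, Des, Finset.sum_filter, majL, word_length]
  apply Finset.sum_nbij' (fun t => t + 1) (fun i => i - 1)
  · intro t ht
    rw [Finset.mem_range] at ht
    rw [Finset.mem_Ioo]
    omega
  · intro i hi
    rw [Finset.mem_Ioo] at hi
    rw [Finset.mem_range]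
    omega
  · intro t _
    omega
  · intro i hi
    rw [Finset.mem_Ioo] at hi
    omega
  · intro t ht
    rw [Finset.mem_range] at ht
    rw [word_getD σ (show t < n by omega), word_getD σ (show t+1 < n by omega)]
    have h1 : wrd σ (t+1) = (σ ⟨t+1, by omega⟩ : ℕ) := by rw [wrd, dif_pos]
    have h2 : wrd σ (t+1-1) = (σ ⟨t, by omega⟩ : ℕ) := by
      simp only [Nat.add_sub_cancel]
      rw [wrd, dif_pos]
    rw [h1, h2]
    by_cases hc : (σ ⟨t+1, by omega⟩ : ℕ) < (σ ⟨t, by omega⟩ : ℕ)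
    · rw [if_pos (by omega), if_pos hc]
    · rw [if_neg (by omega), if_neg hc]

lemma Mc_injective {σ τ : Equiv.Perm (Fin n)} (h : ∀ i, Mc σ i = Mc τ i) : σ = τ := by
  have key : ∀ m j, n ≤ j + m → W σ j = W τ j := by
    intro m
    induction m with
    | zero =>
      intro j hj
      rw [W_nil σ (by omega), W_nil τ (by omega)]
    | succ m ih =>
      intro j hj
      rcases Nat.lt_or_ge j n with hjn | hjn
      · have hW : W σ (j+1) = W τ (j+1) := ih (j+1) (by omega)
        obtain ⟨k, hk, hmσ, hwσ⟩ := Mc_spec σ hjn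
        obtain ⟨k', hk', hmτ, hwτ⟩ := Mc_spec τ hjn
        have hkk : k = k' := by
          apply delta_inj (w := W σ (j+1))
          rw [← hmσ, h j, hmτ, hW]
        rw [hwσ, hwτ, hW, hkk]
      · rw [W_nil σ hjn, W_nil τ hjn]
  have hword : word σ = word τ := by
    have h0σ : W σ 0 = word σ := List.filter_eq_self.2 (fun x hx => by
      rw [decide_eq_true_eq]; have := (word_mem σ x).1 hx; omega)
    have h0τ : W τ 0 = word τ := List.filter_eq_self.2 (fun x hx => by
      rw [decide_eq_true_eq]; have := (word_mem τ x).1 hx; omega)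
    rw [← h0σ, ← h0τ, key n 0 (by omega)]
  apply Equiv.ext
  intro x
  have hg := congrArg (fun l => l.getD (x : ℕ) 0) hword
  rw [word_getD σ x.isLt, word_getD τ x.isLt] at hg
  have hx : (⟨(x:ℕ), x.isLt⟩ : Fin n) = x := rfl
  rw [hx] at hg
  exact Fin.ext (by omega)

open Classical in
noncomputable def pick (w : List ℕ) (v : ℕ) : ℕ :=
  if h : ∃ k, k ≤ w.length ∧ delta w k = v then h.choose else 0

lemma pick_spec {w : List ℕ} {v : ℕ} (hv : v ≤ w.length) :
    pick w v ≤ w.length ∧ delta w (pick w v) = v := by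
  have h : ∃ k, k ≤ w.length ∧ delta w k = v := delta_surj w hv
  rw [pick, dif_pos h]
  exact h.choose_spec

noncomputable def build (c : ℕ → ℕ) (n : ℕ) : ℕ → List ℕ
  | 0 => []
  | j+1 => (build c n j).insertIdx (pick (build c n j) (c (n - (j+1)))) (n - j)

lemma build_zero (c : ℕ → ℕ) (n : ℕ) : build c n 0 = [] := rfl

lemma build_succ (c : ℕ → ℕ) (n j : ℕ) :
    build c n (j+1) = (build c n j).insertIdx (pick (build c n j) (c (n - (j+1)))) (n - j) := rfl

lemma insertIdx_eq {α : Type*} (a : α) : ∀ (k : ℕ) (l : List α), k ≤ l.length →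
    l.insertIdx k a = l.take k ++ a :: l.drop k := by
  intro k
  induction k with
  | zero =>
    intro l _
    simp [List.insertIdx_zero]
  | succ k ih =>
    intro l hl
    cases l with
    | nil => simp at hl
    | cons x xs =>
      rw [List.insertIdx_succ_cons, ih xs (by simpa using hl), List.take_succ_cons,
        List.drop_succ_cons, List.cons_append]

lemma build_inv (c : ℕ → ℕ) (n : ℕ) (hc : ∀ i, i < n → c i + i < n) :
    ∀ j, j ≤ n → (build c n j).length = j ∧ (∀ x ∈ build c n j, n - j < x ∧ x ≤ n) ∧
      (build c n j).Nodup := by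
  intro j
  induction j with
  | zero =>
    intro _
    refine ⟨rfl, by simp [build_zero], List.nodup_nil⟩
  | succ j ih =>
    intro hj
    obtain ⟨hlen, hmem, hnd⟩ := ih (by omega)
    have hcle : c (n - (j+1)) ≤ j := by
      have := hc (n - (j+1)) (by omega)
      omega
    have hps := pick_spec (w := build c n j) (v := c (n - (j+1))) (by rw [hlen]; exact hcle)
    refine ⟨?_, ?_, ?_⟩
    · rw [build_succ, List.length_insertIdx_of_le_length hps.1, hlen]
    · intro x hx
      rw [build_succ, List.mem_insertIdx hps.1] at hx
      rcases hx with rfl | hx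
      · omega
      · have := hmem x hx; omega
    · have hperm := List.perm_insertIdx (n - j) (build c n j) hps.1
      rw [build_succ, hperm.nodup_iff, List.nodup_cons]
      exact ⟨fun hc' => by have := hmem _ hc'; omega, hnd⟩

lemma build_majL (c : ℕ → ℕ) (n : ℕ) (hc : ∀ i, i < n → c i + i < n) {j : ℕ} (hj : j < n) :
    majL (build c n (j+1)) = majL (build c n j) + c (n - (j+1)) := by
  obtain ⟨hlen, hmem, -⟩ := build_inv c n hc j (by omega)
  have hcle : c (n - (j+1)) ≤ j := by
    have := hc (n - (j+1)) (by omega)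
    omega
  have hps := pick_spec (w := build c n j) (v := c (n - (j+1))) (by rw [hlen]; exact hcle)
  rw [build_succ, insertIdx_eq _ _ _ hps.1,
    majL_insert _ _ _ (fun x hx => (hmem x (List.mem_of_mem_take hx)).1)
      (fun x hx => (hmem x (List.mem_of_mem_drop hx)).1),
    List.take_append_drop, List.length_take, Nat.min_eq_left hps.1]
  rw [hps.2]

lemma build_filter (c : ℕ → ℕ) (n : ℕ) (hc : ∀ i, i < n → c i + i < n) :
    ∀ j', j' ≤ n → ∀ j, j ≤ j' →
      (build c n j').filter (fun x => decide (n - j + 1 ≤ x)) = build c n j := by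
  intro j'
  induction j' with
  | zero =>
    intro _ j hj
    have : j = 0 := by omega
    subst this
    rfl
  | succ j' ih =>
    intro hj' j hj
    rcases Nat.eq_or_lt_of_le hj with heq | hlt
    · rw [heq]
      apply List.filter_eq_self.2
      intro x hx
      rw [decide_eq_true_eq]
      have := (build_inv c n hc (j'+1) hj').2.1 x hx
      omega
    · have hj'' : j ≤ j' := by omega
      obtain ⟨hlen, hmem, -⟩ := build_inv c n hc j' (by omega)
      have hcle : c (n - (j'+1)) ≤ j' := by
        have := hc (n - (j'+1)) (by omega)
        omega
      have hps := pick_spec (w := build c n j') (v := c (n - (j'+1))) (by rw [hlen]; exact hcle)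
      rw [build_succ, insertIdx_eq _ _ _ hps.1, List.filter_append,
        List.filter_cons_of_neg (by simp only [decide_eq_true_eq]; intro hcon; omega),
        ← List.filter_append, List.take_append_drop]
      exact ih (by omega) j hj''

end MC

/-- The major code is a bijection from `S_n` onto the set of sub-diagonal sequences, and
the sum of its entries is the major index. -/
theorem major_code_bijective_and_sum (n : ℕ) :
    Set.BijOn (fun σ : Equiv.Perm (Fin n) => Paper.Mc σ) Set.univ (Paper.SubDiag n) ∧
    ∀ σ : Equiv.Perm (Fin n), ∑ i ∈ Finset.range n, Paper.Mc σ i = Paper.maj σ := by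
  constructor
  · refine ⟨?_, ?_, ?_⟩
    · -- MapsTo
      intro σ _
      refine ⟨fun i hi => ?_, fun i hi => MC.Mc_zero σ hi⟩
      show Paper.Mc σ i + i < n
      have := MC.Mc_le (σ := σ) hi
      omega
    · -- InjOn
      intro σ _ τ _ h
      exact MC.Mc_injective (fun i => congrFun h i)
    · -- SurjOn
      intro c hc
      obtain ⟨hc1, hc2⟩ := hc
      obtain ⟨hlen, hmem, hnd⟩ := MC.build_inv c n hc1 n le_rfl
      set u := MC.build c n n with hu
      have hb : ∀ i : Fin n, u.getD (i:ℕ) 0 - 1 < n := by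
        intro i
        have hi : (i:ℕ) < u.length := by rw [hlen]; exact i.isLt
        rw [List.getD_eq_getElem _ _ hi]
        have := hmem _ (List.getElem_mem hi)
        omega
      let f : Fin n → Fin n := fun i => ⟨u.getD (i:ℕ) 0 - 1, hb i⟩
      have hinj : Function.Injective f := by
        intro i i' hii
        have hi : (i:ℕ) < u.length := by rw [hlen]; exact i.isLt
        have hi' : (i':ℕ) < u.length := by rw [hlen]; exact i'.isLt
        have h1 := hmem _ (List.getElem_mem hi)
        have h1' := hmem _ (List.getElem_mem hi')
        have hval : u.getD (i:ℕ) 0 - 1 = u.getD (i':ℕ) 0 - 1 := congrArg Fin.val hii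
        rw [List.getD_eq_getElem _ _ hi, List.getD_eq_getElem _ _ hi'] at hval
        have hEl : u[(i:ℕ)] = u[(i':ℕ)] := by omega
        have := (hnd.getElem_inj_iff).1 hEl
        exact Fin.ext this
      let σ : Equiv.Perm (Fin n) := Equiv.ofBijective f (Finite.injective_iff_bijective.1 hinj)
      have hσ : ∀ i : Fin n, σ i = f i := fun i => rfl
      have hword : Paper.word σ = u := by
        apply List.ext_getElem
        · rw [MC.word_length, hlen]
        · intro t h1 h2
          have htn : t < n := by rwa [MC.word_length] at h1
          have h3 : t < u.length := h2
          have h4 := hmem _ (List.getElem_mem h3)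
          have h5 : (Paper.word σ)[t] = (σ ⟨t, htn⟩ : ℕ) + 1 := by
            simp only [Paper.word, List.getElem_ofFn]
          rw [h5, hσ]
          show u.getD t 0 - 1 + 1 = u[t]
          rw [List.getD_eq_getElem _ _ h3]
          omega
      refine ⟨σ, Set.mem_univ σ, funext fun i => ?_⟩
      show Paper.Mc σ i = c i
      rcases Nat.lt_or_ge i n with hi | hi
      · have hW1 : MC.W σ i = MC.build c n (n - i) := by
          have hf := MC.build_filter c n hc1 n le_rfl (n - i) (by omega)
          rw [show n - (n - i) + 1 = i + 1 by omega] at hf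
          rw [MC.W, hword]
          exact hf
        have hW2 : MC.W σ (i+1) = MC.build c n (n - (i+1)) := by
          have hf := MC.build_filter c n hc1 n le_rfl (n - (i+1)) (by omega)
          rw [show n - (n - (i+1)) + 1 = i + 1 + 1 by omega] at hf
          rw [MC.W, hword]
          exact hf
        have hmaj := MC.build_majL c n hc1 (j := n - (i+1)) (by omega)
        rw [show n - (i+1) + 1 = n - i by omega] at hmaj
        rw [show n - (n - i) = i by omega] at hmaj
        rw [MC.Mc_eq, hW1, hW2]
        omega
      · rw [MC.Mc_zero σ hi, hc2 i hi]
  · intro σ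
    rw [MC.sum_Mc, MC.majL_word]
end

section
/- The saillance code is a bijection from S_n to the set of sub-diagonal sequences of length n. -/
open Finset

section Aux

open Paper

private lemma Sc_spec {n : ℕ} (σ : Equiv.Perm (Fin n)) {i : ℕ} (h : i < n) :
    Sc σ i = if hL : (Finset.univ.filter fun j : Fin n =>
        j < σ⁻¹ ⟨i, h⟩ ∧ (⟨i, h⟩ : Fin n) < σ j).Nonempty then
      n - (σ ((Finset.univ.filter fun j : Fin n =>
        j < σ⁻¹ ⟨i, h⟩ ∧ (⟨i, h⟩ : Fin n) < σ j).max' hL) : ℕ) else 0 := by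
  simp only [Sc, dif_pos h]

private lemma sc_mapsTo {n : ℕ} (σ : Equiv.Perm (Fin n)) : Sc σ ∈ SubDiag n := by
  constructor
  · intro i hi
    rw [Sc_spec σ hi]
    split
    · rename_i hL
      have hmem := Finset.max'_mem _ hL
      rw [Finset.mem_filter] at hmem
      have h1 : i < (σ (Finset.max' _ hL) : ℕ) := hmem.2.2
      have h2 : (σ (Finset.max' _ hL) : ℕ) < n := (σ _).isLt
      omega
    · omega
  · intro i hi
    simp only [Sc]
    rw [dif_neg (by omega)]

/-- Characterization of the saillance code entry. -/
private lemma sc_char {n : ℕ} (σ : Equiv.Perm (Fin n)) {i : ℕ} (hi : i < n) :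
    (Sc σ i = 0 ∧ ∀ b : Fin n, i < (b : ℕ) → σ⁻¹ ⟨i, hi⟩ < σ⁻¹ b) ∨
    (∃ b0 : Fin n, (b0 : ℕ) = n - Sc σ i ∧ Sc σ i ≠ 0 ∧ i < (b0 : ℕ) ∧
      ∀ b : Fin n, i < (b : ℕ) →
        (σ⁻¹ b < σ⁻¹ ⟨i, hi⟩ ↔ (b = b0 ∨ σ⁻¹ b < σ⁻¹ b0))) := by
  rw [Sc_spec σ hi]
  split
  · rename_i hL
    right
    have hmem := Finset.max'_mem _ hL
    rw [Finset.mem_filter] at hmem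
    obtain ⟨-, hlt, hgt⟩ := hmem
    have hvlt : (σ (Finset.max' _ hL) : ℕ) < n := (σ _).isLt
    have higt : i < (σ (Finset.max' _ hL) : ℕ) := hgt
    refine ⟨σ (Finset.max' _ hL), by omega, by omega, higt, ?_⟩
    intro b hb
    have hinv : σ⁻¹ (σ (Finset.max' _ hL)) = Finset.max' _ hL := σ.symm_apply_apply _
    constructor
    · intro hlt2
      have hjmem : σ⁻¹ b ∈ Finset.univ.filter fun j : Fin n =>
          j < σ⁻¹ ⟨i, hi⟩ ∧ (⟨i, hi⟩ : Fin n) < σ j := by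
        rw [Finset.mem_filter]
        refine ⟨Finset.mem_univ _, hlt2, ?_⟩
        rw [show σ (σ⁻¹ b) = b from σ.apply_symm_apply b]
        exact hb
      have hle := Finset.le_max' _ _ hjmem
      rcases eq_or_lt_of_le hle with heq | hlt3
      · left
        have : σ (σ⁻¹ b) = σ (Finset.max' _ hL) := by rw [heq]
        rwa [show σ (σ⁻¹ b) = b from σ.apply_symm_apply b] at this
      · right
        rwa [hinv]
    · rintro (rfl | hlt2)
      · rwa [hinv]
      · rw [hinv] at hlt2
        exact hlt2.trans hlt
  · rename_i hL
    left
    refine ⟨rfl, ?_⟩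
    intro b hb
    by_contra hcon
    have hne : σ⁻¹ b ≠ σ⁻¹ ⟨i, hi⟩ := by
      intro e
      have : b = (⟨i, hi⟩ : Fin n) := σ⁻¹.injective e
      rw [this] at hb
      exact lt_irrefl _ hb
    have hlt2 : σ⁻¹ b < σ⁻¹ ⟨i, hi⟩ := (not_lt.mp hcon).lt_of_ne hne
    exact hL ⟨σ⁻¹ b, by
      rw [Finset.mem_filter]
      refine ⟨Finset.mem_univ _, hlt2, ?_⟩
      rw [show σ (σ⁻¹ b) = b from σ.apply_symm_apply b]
      exact hb⟩

private lemma lt_iff_not_lt' {α : Type*} [LinearOrder α] {x y : α} (h : x ≠ y) :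
    x < y ↔ ¬ y < x :=
  ⟨fun h' h'' => lt_asymm h' h'', fun h' => (not_lt.mp h').lt_of_ne h⟩

private lemma sc_injective {n : ℕ} :
    Function.Injective fun σ : Equiv.Perm (Fin n) => Sc σ := by
  intro σ τ h
  replace h : Sc σ = Sc τ := h
  have key : ∀ k, k ≤ n → ∀ a b : Fin n, n - k ≤ (a : ℕ) → n - k ≤ (b : ℕ) →
      (σ⁻¹ a < σ⁻¹ b ↔ τ⁻¹ a < τ⁻¹ b) := by
    intro k
    induction k with
    | zero =>
      intro _ a b ha _
      exact absurd ha (by have := a.isLt; omega)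
    | succ k ih =>
      intro hk a b ha hb
      have hi : n - (k + 1) < n := by omega
      set i := n - (k + 1) with hidef
      have hsc : Sc σ i = Sc τ i := congrFun h i
      -- The key claim: for letters `b` with value `> i`, whether `b` occurs before `i`
      -- is the same in `σ` and `τ`.
      have C : ∀ c : Fin n, i < (c : ℕ) →
          (σ⁻¹ c < σ⁻¹ ⟨i, hi⟩ ↔ τ⁻¹ c < τ⁻¹ ⟨i, hi⟩) := by
        intro c hc
        rcases sc_char σ hi with ⟨hz, hall⟩ | ⟨b0, hb0v, hnz, hb0i, hiff⟩
        · rcases sc_char τ hi with ⟨hz', hall'⟩ | ⟨b0', hb0v', hnz', hb0i', hiff'⟩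
          · constructor
            · intro h'; exact absurd h' (lt_asymm (hall c hc))
            · intro h'; exact absurd h' (lt_asymm (hall' c hc))
          · rw [hz] at hsc; exact absurd hsc.symm hnz'
        · rcases sc_char τ hi with ⟨hz', hall'⟩ | ⟨b0', hb0v', hnz', hb0i', hiff'⟩
          · rw [hz'] at hsc; exact absurd hsc hnz
          · have hb0eq : b0 = b0' := Fin.ext (by rw [hb0v, hb0v', hsc])
            rw [hiff c hc, hiff' c hc, ← hb0eq]
            have hmid : σ⁻¹ c < σ⁻¹ b0 ↔ τ⁻¹ c < τ⁻¹ b0 :=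
              ih (by omega) c b0 (by omega) (by omega)
            rw [hmid]
      rcases eq_or_lt_of_le ha with haeq | halt
      · rcases eq_or_lt_of_le hb with hbeq | hblt
        · -- a = b = i
          have : a = b := Fin.ext (by omega)
          subst this
          simp
        · -- a has value i, b > i
          have haeq' : a = ⟨i, hi⟩ := Fin.ext haeq.symm
          subst haeq'
          have hne1 : σ⁻¹ ⟨i, hi⟩ ≠ σ⁻¹ b := fun e => by
            have h2 : (⟨i, hi⟩ : Fin n) = b := σ⁻¹.injective e
            have h3 : (b : ℕ) = i := by rw [← h2]
            omega
          have hne2 : τ⁻¹ ⟨i, hi⟩ ≠ τ⁻¹ b := fun e => by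
            have h2 : (⟨i, hi⟩ : Fin n) = b := τ⁻¹.injective e
            have h3 : (b : ℕ) = i := by rw [← h2]
            omega
          rw [lt_iff_not_lt' hne1, lt_iff_not_lt' hne2]
          exact not_congr (C b hblt)
      · rcases eq_or_lt_of_le hb with hbeq | hblt
        · -- b has value i, a > i
          have hbeq' : b = ⟨i, hi⟩ := Fin.ext hbeq.symm
          subst hbeq'
          exact C a halt
        · exact ih (by omega) a b (by omega) (by omega)
  have full : ∀ a b : Fin n, σ⁻¹ a < σ⁻¹ b ↔ τ⁻¹ a < τ⁻¹ b := fun a b =>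
    key n le_rfl a b (by omega) (by omega)
  have hsm : StrictMono (fun x : Fin n => τ⁻¹ (σ x)) := by
    intro x y hxy
    exact (full (σ x) (σ y)).mp (by simpa using hxy)
  haveI : WellFoundedLT (Fin n) := Finite.to_wellFoundedLT
  have hid : (fun x : Fin n => τ⁻¹ (σ x)) = id := by
    apply (hsm.range_inj strictMono_id).1
    rw [Set.range_id]
    exact Set.range_eq_univ.mpr fun y => ⟨σ⁻¹ (τ y), by simp⟩
  apply Equiv.ext
  intro x
  have := congrFun hid x
  simp only [id_eq] at this
  calc σ x = τ (τ⁻¹ (σ x)) := by rw [show τ (τ⁻¹ (σ x)) = σ x from τ.apply_symm_apply _]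
    _ = τ x := by rw [this]

private def subdiagEquiv (n : ℕ) :
    {c : ℕ → ℕ // c ∈ Paper.SubDiag n} ≃ (∀ i : Fin n, Fin (n - (i : ℕ))) where
  toFun c i := ⟨c.1 i, by have := c.2.1 i i.isLt; omega⟩
  invFun f := ⟨fun i => if h : i < n then (f ⟨i, h⟩ : ℕ) else 0, by
    refine ⟨fun i hi => ?_, fun i hi => ?_⟩
    · dsimp only
      rw [dif_pos hi]
      have h2 : ((f ⟨i, hi⟩ : ℕ)) < n - i := (f ⟨i, hi⟩).isLt
      omega
    · dsimp only
      rw [dif_neg (by omega)]⟩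
  left_inv c := by
    apply Subtype.ext; funext i
    by_cases h : i < n
    · simp [h]
    · simp [h, c.2.2 i (by omega)]
  right_inv f := by
    funext i; apply Fin.ext; simp [i.isLt]

private lemma subdiag_finite (n : ℕ) : (Paper.SubDiag n).Finite := by
  have : Finite {c : ℕ → ℕ // c ∈ Paper.SubDiag n} :=
    Finite.of_equiv _ (subdiagEquiv n).symm
  exact Set.toFinite _

private lemma subdiag_ncard (n : ℕ) : (Paper.SubDiag n).ncard = n.factorial := by
  have h1 : (Paper.SubDiag n).ncard = Nat.card {c : ℕ → ℕ // c ∈ Paper.SubDiag n} := rfl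
  rw [h1, Nat.card_congr (subdiagEquiv n)]
  rw [Nat.card_eq_fintype_card, Fintype.card_pi]
  simp only [Fintype.card_fin]
  rw [Fin.prod_univ_eq_prod_range (fun i => n - i) n]
  rw [← Finset.prod_range_add_one_eq_factorial n]
  rw [← Finset.prod_range_reflect (fun j => j + 1) n]
  apply Finset.prod_congr rfl
  intro j hj
  rw [Finset.mem_range] at hj
  omega

end Aux

/-- The saillance code is a bijection from `S_n` onto the set of sub-diagonal sequences. -/
theorem saillance_code_bijective (n : ℕ) :
    Set.BijOn (fun σ : Equiv.Perm (Fin n) => Paper.Sc σ) Set.univ (Paper.SubDiag n) := by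
  refine ⟨fun σ _ => sc_mapsTo σ, fun σ _ τ _ hst => sc_injective hst, ?_⟩
  have himg : (fun σ : Equiv.Perm (Fin n) => Paper.Sc σ) '' Set.univ = Paper.SubDiag n := by
    apply Set.eq_of_subset_of_ncard_le
    · rintro _ ⟨σ, -, rfl⟩; exact sc_mapsTo σ
    · rw [subdiag_ncard, Set.ncard_image_of_injective _ sc_injective, Set.ncard_univ,
        Nat.card_eq_fintype_card]
      simp [Fintype.card_perm]
    · exact subdiag_finite n
  exact himg.symm.subset
end

section
/- Flagged product formula for inverse saillance codes: for a composition I = (i_1,...,i_r) of n, the sum over all permutations σ whose descent set is contained in Des(I) of ∏_j x_{s_j(σ^{-1})} (where (s_j) is the saillance code) equals h_{i_1}(X_{i_2+⋯+i_r}) · h_{i_2}(X_{i_3+⋯+i_r}) ⋯ h_{i_{r-1}}(X_{i_r}) · h_{i_r}(X_0). -/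
open Finset

namespace SPF

open Equiv Paper

variable {a m : ℕ}

/-- number of `i : Fin a` with `(i:ℕ) < c`. -/
lemma card_lt_fin (a c : ℕ) (hc : c ≤ a) :
    (Finset.univ.filter fun i : Fin a => (i : ℕ) < c).card = c := by
  rw [Finset.card_filter]
  rw [Fin.sum_univ_eq_sum_range (fun i => if i < c then 1 else 0) a]
  rw [← Finset.card_filter]
  have : (Finset.range a).filter (fun i => i < c) = Finset.range c := by
    ext x; simp [Finset.mem_range]; omega
  rw [this, Finset.card_range]

lemma card_filter_perm {n : ℕ} (σ : Equiv.Perm (Fin n)) (p : Fin n → Prop) [DecidablePred p] :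
    (Finset.univ.filter fun q => p (σ q)).card = (Finset.univ.filter p).card := by
  apply Finset.card_bij (fun q _ => σ q)
  · intro q hq; simp only [Finset.mem_filter, Finset.mem_univ, true_and] at hq ⊢; exact hq
  · intro q1 _ q2 _ h; exact σ.injective h
  · intro v hv; exact ⟨σ⁻¹ v, by simpa using (Finset.mem_filter.1 hv).2, by simp⟩

lemma val_eq_card {n : ℕ} (σ : Equiv.Perm (Fin n)) (x : Fin n) :
    (σ x : ℕ) = (Finset.univ.filter fun q => σ q < σ x).card := by
  rw [card_filter_perm σ (fun v => v < σ x)]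
  have : (Finset.univ.filter fun v : Fin n => v < σ x)
      = Finset.univ.filter fun v : Fin n => (v : ℕ) < (σ x : ℕ) := by
    apply Finset.filter_congr; intro v _; exact Fin.lt_def
  rw [this, card_lt_fin n _ (le_of_lt (σ x).isLt)]

lemma card_split (P : Fin (a + m) → Prop) [DecidablePred P] :
    (Finset.univ.filter P).card =
      (Finset.univ.filter fun i : Fin a => P (Fin.castAdd m i)).card +
      (Finset.univ.filter fun k : Fin m => P (Fin.natAdd a k)).card := by
  simp only [Finset.card_filter]
  exact Fin.sum_univ_add (fun p => if P p then 1 else 0)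

def cval (f : Fin a → Fin (m + 1)) (v : ℕ) : ℕ :=
  v + (Finset.univ.filter fun i : Fin a => (f i : ℕ) ≤ v).card

lemma cval_le (f : Fin a → Fin (m + 1)) (v : ℕ) : cval f v ≤ v + a := by
  have h := Finset.card_filter_le (Finset.univ : Finset (Fin a)) (fun i => (f i : ℕ) ≤ v)
  have h2 : (Finset.univ : Finset (Fin a)).card = a := by simp
  unfold cval; omega

lemma cval_strictMono (f : Fin a → Fin (m + 1)) : StrictMono (cval f) := by
  intro v w hvw
  have hsub : (Finset.univ.filter fun i : Fin a => (f i : ℕ) ≤ v)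
      ⊆ Finset.univ.filter fun i : Fin a => (f i : ℕ) ≤ w := by
    intro i hi; simp only [Finset.mem_filter, Finset.mem_univ, true_and] at hi ⊢; omega
  have := Finset.card_le_card hsub
  unfold cval; omega

lemma cval_lt_of {f : Fin a → Fin (m + 1)} (hf : Monotone f) (i : Fin a) {v : ℕ}
    (h : v < f i) : cval f v < (f i : ℕ) + i := by
  have hsub : (Finset.univ.filter fun i' : Fin a => (f i' : ℕ) ≤ v)
      ⊆ Finset.univ.filter fun i' : Fin a => (i' : ℕ) < (i : ℕ) := by
    intro i' hi'
    simp only [Finset.mem_filter, Finset.mem_univ, true_and] at hi' ⊢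
    by_contra hc
    have : i ≤ i' := by omega
    have := hf this
    simp only [Fin.le_def] at this
    omega
  have h1 := Finset.card_le_card hsub
  have h2 := card_lt_fin a i (le_of_lt i.isLt)
  unfold cval; omega

lemma cval_gt {f : Fin a → Fin (m + 1)} (hf : Monotone f) (i : Fin a) {v : ℕ}
    (h : (f i : ℕ) ≤ v) : (f i : ℕ) + (i : ℕ) < cval f v := by
  have hsub : (Finset.univ.filter fun i' : Fin a => (i' : ℕ) < (i : ℕ) + 1)
      ⊆ Finset.univ.filter fun i' : Fin a => (f i' : ℕ) ≤ v := by
    intro i' hi'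
    simp only [Finset.mem_filter, Finset.mem_univ, true_and] at hi' ⊢
    have : i' ≤ i := by rw [Fin.le_def]; omega
    have := hf this
    simp only [Fin.le_def] at this
    omega
  have h1 := Finset.card_le_card hsub
  have h2 := card_lt_fin a ((i : ℕ) + 1) i.isLt
  have h3 := (f i).isLt
  unfold cval; omega

lemma cval_lt_iff {f : Fin a → Fin (m + 1)} (hf : Monotone f) (i : Fin a) (v : ℕ) :
    cval f v < (f i : ℕ) + i ↔ v < f i := by
  constructor
  · intro h; by_contra hc
    have := cval_gt hf i (by omega : (f i : ℕ) ≤ v); omega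
  · exact cval_lt_of hf i

def phiFun (f : Fin a → Fin (m + 1)) (σ' : Equiv.Perm (Fin m)) (p : Fin (a + m)) :
    Fin (a + m) :=
  if h : (p : ℕ) < a then ⟨(f ⟨p, h⟩ : ℕ) + p, by have := (f ⟨p, h⟩).isLt; omega⟩
  else ⟨cval f (σ' ⟨(p : ℕ) - a, by have := p.isLt; omega⟩),
    by
      have h1 := (σ' ⟨(p : ℕ) - a, by have := p.isLt; omega⟩).isLt
      have h2 := cval_le f (σ' ⟨(p : ℕ) - a, by have := p.isLt; omega⟩ : ℕ)
      omega⟩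

lemma phiFun_castAdd (f : Fin a → Fin (m + 1)) (σ' : Equiv.Perm (Fin m)) (i : Fin a) :
    (phiFun f σ' (Fin.castAdd m i) : ℕ) = (f i : ℕ) + i := by
  have hv : ((Fin.castAdd m i : Fin (a + m)) : ℕ) = (i : ℕ) := rfl
  unfold phiFun
  rw [dif_pos (by rw [hv]; exact i.isLt)]
  simp [hv]

lemma phiFun_natAdd (f : Fin a → Fin (m + 1)) (σ' : Equiv.Perm (Fin m)) (k : Fin m) :
    (phiFun f σ' (Fin.natAdd a k) : ℕ) = cval f (σ' k) := by
  have hv : ((Fin.natAdd a k : Fin (a + m)) : ℕ) = a + (k : ℕ) := rfl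
  unfold phiFun
  rw [dif_neg (by omega)]
  have : (⟨((Fin.natAdd a k : Fin (a + m)) : ℕ) - a, by have := (Fin.natAdd a k).isLt; omega⟩ :
      Fin m) = k := by
    apply Fin.ext; simp [hv]
  simp only [this]

lemma phiFun_inj {f : Fin a → Fin (m + 1)} (hf : Monotone f) (σ' : Equiv.Perm (Fin m)) :
    Function.Injective (phiFun f σ') := by
  intro p q h
  induction p using Fin.addCases with
  | left i =>
    induction q using Fin.addCases with
    | left j =>
      have hval : (f i : ℕ) + i = (f j : ℕ) + j := by
        rw [← phiFun_castAdd f σ' i, ← phiFun_castAdd f σ' j, h]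
      rcases lt_trichotomy i j with hij | hij | hij
      · have := hf (le_of_lt hij); rw [Fin.le_def] at this
        rw [Fin.lt_def] at hij; omega
      · rw [hij]
      · have := hf (le_of_lt hij); rw [Fin.le_def] at this
        rw [Fin.lt_def] at hij; omega
    | right k =>
      exfalso
      have hval : (f i : ℕ) + i = cval f (σ' k) := by
        rw [← phiFun_castAdd f σ' i, ← phiFun_natAdd f σ' k, h]
      rcases le_or_gt (f i : ℕ) ((σ' k : ℕ)) with hle | hlt
      · have := cval_gt hf i hle; omega
      · have := cval_lt_of hf i hlt; omega
  | right k =>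
    induction q using Fin.addCases with
    | left j =>
      exfalso
      have hval : cval f (σ' k) = (f j : ℕ) + j := by
        rw [← phiFun_natAdd f σ' k, ← phiFun_castAdd f σ' j, h]
      rcases le_or_gt (f j : ℕ) ((σ' k : ℕ)) with hle | hlt
      · have := cval_gt hf j hle; omega
      · have := cval_lt_of hf j hlt; omega
    | right l =>
      have hval : cval f (σ' k) = cval f (σ' l) := by
        rw [← phiFun_natAdd f σ' k, ← phiFun_natAdd f σ' l, h]
      have h1 : ((σ' k : ℕ)) = ((σ' l : ℕ)) := (cval_strictMono f).injective hval
      have h2 : σ' k = σ' l := Fin.ext h1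
      rw [σ'.injective h2]

noncomputable def Phi (f : Fin a → Fin (m + 1)) (σ' : Equiv.Perm (Fin m)) (hf : Monotone f) :
    Equiv.Perm (Fin (a + m)) :=
  Equiv.ofBijective (phiFun f σ') (Finite.injective_iff_bijective.mp (phiFun_inj hf σ'))

lemma Phi_apply {f : Fin a → Fin (m + 1)} (σ' : Equiv.Perm (Fin m)) (hf : Monotone f)
    (p : Fin (a + m)) : Phi f σ' hf p = phiFun f σ' p := rfl

lemma Phi_inv {f : Fin a → Fin (m + 1)} (σ' : Equiv.Perm (Fin m)) (hf : Monotone f)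
    (p : Fin (a + m)) : (Phi f σ' hf)⁻¹ (phiFun f σ' p) = p := by
  have : phiFun f σ' p = Phi f σ' hf p := rfl
  rw [this, Equiv.Perm.inv_def, Equiv.symm_apply_apply]

def tcode (σ : Equiv.Perm (Fin (a + m))) (i : Fin a) : ℕ :=
  (Finset.univ.filter fun k : Fin m => σ (Fin.natAdd a k) < σ (Fin.castAdd m i)).card

def rnk (σ : Equiv.Perm (Fin (a + m))) (k : Fin m) : ℕ :=
  (Finset.univ.filter fun j : Fin m => σ (Fin.natAdd a j) < σ (Fin.natAdd a k)).card

lemma tcode_le (σ : Equiv.Perm (Fin (a + m))) (i : Fin a) : tcode σ i ≤ m := by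
  have h := Finset.card_filter_le (Finset.univ : Finset (Fin m))
    (fun k => σ (Fin.natAdd a k) < σ (Fin.castAdd m i))
  simpa [tcode] using h

lemma natAdd_injective : Function.Injective (fun k : Fin m => Fin.natAdd a k) := by
  intro j k h
  have : a + (j : ℕ) = a + (k : ℕ) := congrArg Fin.val h
  exact Fin.ext (by omega)

lemma rnk_lt (σ : Equiv.Perm (Fin (a + m))) (k : Fin m) : rnk σ k < m := by
  have hk : k ∉ Finset.univ.filter fun j : Fin m =>
      σ (Fin.natAdd a j) < σ (Fin.natAdd a k) := by
    simp
  have hsub : (Finset.univ.filter fun j : Fin m =>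
      σ (Fin.natAdd a j) < σ (Fin.natAdd a k)) ⊆ Finset.univ.erase k :=
    fun j hj => Finset.mem_erase.mpr ⟨fun he => hk (he ▸ hj), Finset.mem_univ j⟩
  have h1 := Finset.card_le_card hsub
  have h2 : (Finset.univ.erase k).card = m - 1 := by
    rw [Finset.card_erase_of_mem (Finset.mem_univ k)]; simp
  have h3 : 0 < m := k.pos
  unfold rnk; omega

lemma rnk_lt_iff (σ : Equiv.Perm (Fin (a + m))) (j k : Fin m) :
    rnk σ j < rnk σ k ↔ σ (Fin.natAdd a j) < σ (Fin.natAdd a k) := by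
  constructor
  · intro h
    rcases lt_trichotomy (σ (Fin.natAdd a j)) (σ (Fin.natAdd a k)) with hc | hc | hc
    · exact hc
    · exfalso
      have : j = k := natAdd_injective (σ.injective hc)
      rw [this] at h; omega
    · exfalso
      have hsub : insert k (Finset.univ.filter fun l : Fin m =>
          σ (Fin.natAdd a l) < σ (Fin.natAdd a k)) ⊆
          Finset.univ.filter fun l : Fin m => σ (Fin.natAdd a l) < σ (Fin.natAdd a j) := by
        intro l hl
        rcases Finset.mem_insert.1 hl with h1 | h1
        · subst h1; simp [hc]
        · simp only [Finset.mem_filter, Finset.mem_univ, true_and] at h1 ⊢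
          exact lt_trans h1 hc
      have hkn : k ∉ Finset.univ.filter fun l : Fin m =>
          σ (Fin.natAdd a l) < σ (Fin.natAdd a k) := by simp
      have := Finset.card_le_card hsub
      rw [Finset.card_insert_of_notMem hkn] at this
      unfold rnk at h; omega
  · intro hc
    have hsub : insert j (Finset.univ.filter fun l : Fin m =>
        σ (Fin.natAdd a l) < σ (Fin.natAdd a j)) ⊆
        Finset.univ.filter fun l : Fin m => σ (Fin.natAdd a l) < σ (Fin.natAdd a k) := by
      intro l hl
      rcases Finset.mem_insert.1 hl with h1 | h1
      · subst h1; simp [hc]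
      · simp only [Finset.mem_filter, Finset.mem_univ, true_and] at h1 ⊢
        exact lt_trans h1 hc
    have hjn : j ∉ Finset.univ.filter fun l : Fin m =>
        σ (Fin.natAdd a l) < σ (Fin.natAdd a j) := by simp
    have := Finset.card_le_card hsub
    rw [Finset.card_insert_of_notMem hjn] at this
    unfold rnk; omega

def psiF (σ : Equiv.Perm (Fin (a + m))) : Fin a → Fin (m + 1) :=
  fun i => ⟨tcode σ i, by have := tcode_le σ i; omega⟩

def rnkF (σ : Equiv.Perm (Fin (a + m))) : Fin m → Fin m :=
  fun k => ⟨rnk σ k, rnk_lt σ k⟩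

lemma rnkF_inj (σ : Equiv.Perm (Fin (a + m))) : Function.Injective (rnkF σ) := by
  intro j k h
  have hval : rnk σ j = rnk σ k := congrArg Fin.val h
  by_contra hne
  rcases lt_trichotomy (σ (Fin.natAdd a j)) (σ (Fin.natAdd a k)) with hc | hc | hc
  · have := (rnk_lt_iff σ j k).mpr hc; omega
  · exact hne (natAdd_injective (σ.injective hc))
  · have := (rnk_lt_iff σ k j).mpr hc; omega

noncomputable def psiP (σ : Equiv.Perm (Fin (a + m))) : Equiv.Perm (Fin m) :=
  Equiv.ofBijective (rnkF σ) (Finite.injective_iff_bijective.mp (rnkF_inj σ))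

lemma psiP_apply (σ : Equiv.Perm (Fin (a + m))) (k : Fin m) :
    (psiP σ k : ℕ) = rnk σ k := rfl

/-- Specification of `Sc` when a maximal element of `L` is given. -/
lemma Sc_eq_of {n : ℕ} (τ : Equiv.Perm (Fin n)) {i : ℕ} (h : i < n) (j₀ : Fin n)
    (h1 : j₀ < τ⁻¹ ⟨i, h⟩) (h2 : (⟨i, h⟩ : Fin n) < τ j₀)
    (h3 : ∀ j : Fin n, j < τ⁻¹ ⟨i, h⟩ → (⟨i, h⟩ : Fin n) < τ j → j ≤ j₀) :
    Sc τ i = n - (τ j₀ : ℕ) := by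
  unfold Sc
  rw [dif_pos h]
  simp only
  set L := Finset.univ.filter fun j : Fin n => j < τ⁻¹ ⟨i, h⟩ ∧ (⟨i, h⟩ : Fin n) < τ j with hL
  have hmem : j₀ ∈ L := Finset.mem_filter.mpr ⟨Finset.mem_univ _, h1, h2⟩
  have hne : L.Nonempty := ⟨j₀, hmem⟩
  rw [dif_pos hne]
  have hmax : L.max' hne = j₀ := by
    apply le_antisymm
    · apply Finset.max'_le
      intro j hj
      have := Finset.mem_filter.1 hj
      exact h3 j this.2.1 this.2.2
    · exact Finset.le_max' L j₀ hmem
  rw [hmax]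

lemma Sc_eq_zero_of {n : ℕ} (τ : Equiv.Perm (Fin n)) {i : ℕ} (h : i < n)
    (h3 : ∀ j : Fin n, j < τ⁻¹ ⟨i, h⟩ → ¬((⟨i, h⟩ : Fin n) < τ j)) :
    Sc τ i = 0 := by
  unfold Sc
  rw [dif_pos h]
  simp only
  rw [dif_neg]
  rintro ⟨j, hj⟩
  have := Finset.mem_filter.1 hj
  exact h3 j this.2.1 this.2.2

lemma tcode_Phi {f : Fin a → Fin (m + 1)} (hf : Monotone f) (σ' : Equiv.Perm (Fin m))
    (i : Fin a) : tcode (Phi f σ' hf) i = f i := by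
  unfold tcode
  have hiff : ∀ k : Fin m, k ∈ (Finset.univ : Finset (Fin m)) →
      ((Phi f σ' hf (Fin.natAdd a k) < Phi f σ' hf (Fin.castAdd m i)) ↔
        ((σ' k : ℕ) < f i)) := by
    intro k _
    rw [Fin.lt_def, Phi_apply, Phi_apply, phiFun_natAdd, phiFun_castAdd]
    exact cval_lt_iff hf i _
  rw [Finset.filter_congr hiff]
  rw [card_filter_perm σ' (fun w : Fin m => (w : ℕ) < f i)]
  exact card_lt_fin m (f i) (by have := (f i).isLt; omega)

lemma rnk_Phi {f : Fin a → Fin (m + 1)} (hf : Monotone f) (σ' : Equiv.Perm (Fin m))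
    (k : Fin m) : rnk (Phi f σ' hf) k = σ' k := by
  unfold rnk
  have hiff : ∀ j : Fin m, j ∈ (Finset.univ : Finset (Fin m)) →
      ((Phi f σ' hf (Fin.natAdd a j) < Phi f σ' hf (Fin.natAdd a k)) ↔
        ((σ' j : ℕ) < (σ' k : ℕ))) := by
    intro j _
    rw [Fin.lt_def, Phi_apply, Phi_apply, phiFun_natAdd, phiFun_natAdd]
    exact (cval_strictMono f).lt_iff_lt
  rw [Finset.filter_congr hiff]
  rw [card_filter_perm σ' (fun w : Fin m => (w : ℕ) < (σ' k : ℕ))]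
  exact card_lt_fin m (σ' k) (by have := (σ' k).isLt; omega)

lemma psiF_Phi {f : Fin a → Fin (m + 1)} (hf : Monotone f) (σ' : Equiv.Perm (Fin m)) :
    psiF (Phi f σ' hf) = f :=
  funext fun i => Fin.ext (tcode_Phi hf σ' i)

lemma psiP_Phi {f : Fin a → Fin (m + 1)} (hf : Monotone f) (σ' : Equiv.Perm (Fin m)) :
    psiP (Phi f σ' hf) = σ' :=
  Equiv.ext fun k => Fin.ext (by rw [psiP_apply, rnk_Phi hf])

lemma mem_desComp_cons {J : List ℕ} {x : ℕ} :
    x ∈ DesComp (a :: J) ↔ (J ≠ [] ∧ x = a) ∨ ∃ y ∈ DesComp J, x = a + y := by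
  unfold DesComp
  simp only [Finset.mem_image, Finset.mem_range, List.length_cons, Nat.succ_sub_one]
  constructor
  · rintro ⟨k, hk, rfl⟩
    cases k with
    | zero =>
      left
      refine ⟨fun h => by subst h; simp at hk, by simp⟩
    | succ k' =>
      right
      refine ⟨(J.take (k' + 1)).sum, ⟨k', by omega, rfl⟩, by simp⟩
  · rintro (⟨hJ, rfl⟩ | ⟨y, hy, rfl⟩)
    · exact ⟨0, by cases J with | nil => exact absurd rfl hJ | cons b l => simp, by simp⟩
    · obtain ⟨k, hk, rfl⟩ := hy
      exact ⟨k + 1, by omega, by simp⟩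

lemma desComp_cons_ge {J : List ℕ} {x : ℕ} (h : x ∈ DesComp (a :: J)) : a ≤ x := by
  rcases mem_desComp_cons.1 h with ⟨_, rfl⟩ | ⟨y, _, rfl⟩ <;> omega

lemma mem_Des_iff {n : ℕ} (σ : Equiv.Perm (Fin n)) (x : ℕ) :
    x ∈ Des σ ↔ (0 < x ∧ x < n) ∧ wrd σ x < wrd σ (x - 1) := by
  unfold Des
  rw [Finset.mem_filter, Finset.mem_Ioo]

lemma wrd_eq {n : ℕ} (σ : Equiv.Perm (Fin n)) {x : ℕ} (h : x < n) :
    wrd σ x = (σ ⟨x, h⟩ : ℕ) := by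
  unfold wrd; rw [dif_pos h]

section Block1

variable {J : List ℕ} (σ : Equiv.Perm (Fin (a + m))) (hσ : Des σ ⊆ DesComp (a :: J))

include hσ

lemma block1_adj {i : ℕ} (h0 : 0 < i) (hia : i < a) :
    (σ ⟨i - 1, by omega⟩ : ℕ) < (σ ⟨i, by omega⟩ : ℕ) := by
  have hni : i ∉ Des σ := fun hd => by have := desComp_cons_ge (hσ hd); omega
  have hw : ¬ (wrd σ i < wrd σ (i - 1)) := fun hc =>
    hni ((mem_Des_iff σ i).mpr ⟨⟨h0, by omega⟩, hc⟩)
  rw [wrd_eq σ (show i < a + m by omega), wrd_eq σ (show i - 1 < a + m by omega)] at hw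
  have hne : (σ ⟨i - 1, by omega⟩ : ℕ) ≠ (σ ⟨i, by omega⟩ : ℕ) := by
    intro hc
    have := σ.injective (Fin.ext hc)
    simp only [Fin.mk.injEq] at this
    omega
  omega

lemma block1_le : ∀ (d i : ℕ) (h : i + d < a),
    (σ ⟨i, by omega⟩ : ℕ) ≤ (σ ⟨i + d, by omega⟩ : ℕ) := by
  intro d
  induction d with
  | zero => intro i h; simp
  | succ d ih =>
    intro i h
    have h1 := ih i (by omega)
    have h2 := block1_adj σ hσ (show 0 < i + d + 1 by omega) (show i + d + 1 < a by omega)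
    have he : (⟨i + d + 1 - 1, by omega⟩ : Fin (a + m)) = ⟨i + d, by omega⟩ :=
      Fin.ext (by simp)
    rw [he] at h2
    have he2 : (⟨i + (d + 1), by omega⟩ : Fin (a + m)) = ⟨i + d + 1, by omega⟩ :=
      Fin.ext (by simp [Nat.add_assoc])
    rw [he2]
    omega

lemma block1_lt {p q : ℕ} (hpq : p < q) (hq : q < a) :
    (σ ⟨p, by omega⟩ : ℕ) < (σ ⟨q, by omega⟩ : ℕ) := by
  have h1 := block1_le σ hσ (q - 1 - p) p (by omega)
  have h2 := block1_adj σ hσ (show 0 < q by omega) hq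
  have he : (⟨p + (q - 1 - p), by omega⟩ : Fin (a + m)) = ⟨q - 1, by omega⟩ :=
    Fin.ext (by simp; omega)
  rw [he] at h1
  omega

lemma block1_lt_iff (i j : Fin a) :
    σ (Fin.castAdd m i) < σ (Fin.castAdd m j) ↔ i < j := by
  have hci : Fin.castAdd m i = (⟨(i : ℕ), by have := i.isLt; omega⟩ : Fin (a + m)) :=
    Fin.ext rfl
  have hcj : Fin.castAdd m j = (⟨(j : ℕ), by have := j.isLt; omega⟩ : Fin (a + m)) :=
    Fin.ext rfl
  constructor
  · intro h
    rcases lt_trichotomy i j with hc | hc | hc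
    · exact hc
    · exfalso; rw [hc] at h; exact lt_irrefl _ h
    · exfalso
      have := block1_lt σ hσ (show (j : ℕ) < (i : ℕ) from hc) i.isLt
      rw [← hci, ← hcj] at this
      rw [Fin.lt_def] at h
      omega
  · intro h
    have := block1_lt σ hσ (show (i : ℕ) < (j : ℕ) from h) j.isLt
    rw [← hci, ← hcj] at this
    rw [Fin.lt_def]
    exact this

lemma apply_castAdd_eq (i : Fin a) :
    (σ (Fin.castAdd m i) : ℕ) = (i : ℕ) + tcode σ i := by
  rw [val_eq_card σ (Fin.castAdd m i), card_split]
  congr 1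
  have hiff : ∀ i' : Fin a, i' ∈ (Finset.univ : Finset (Fin a)) →
      ((σ (Fin.castAdd m i') < σ (Fin.castAdd m i)) ↔ ((i' : ℕ) < (i : ℕ))) := by
    intro i' _
    rw [block1_lt_iff σ hσ, Fin.lt_def]
  rw [Finset.filter_congr hiff]
  exact card_lt_fin a i (le_of_lt i.isLt)

lemma tcode_le_iff (i : Fin a) (k : Fin m) :
    tcode σ i ≤ rnk σ k ↔ σ (Fin.castAdd m i) < σ (Fin.natAdd a k) := by
  constructor
  · intro h
    rcases lt_trichotomy (σ (Fin.castAdd m i)) (σ (Fin.natAdd a k)) with hc | hc | hc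
    · exact hc
    · exfalso
      have : Fin.castAdd m i = Fin.natAdd a k := σ.injective hc
      have := congrArg Fin.val this
      simp only [Fin.coe_castAdd, Fin.coe_natAdd] at this
      have := i.isLt
      omega
    · exfalso
      have hsub : insert k (Finset.univ.filter fun l : Fin m =>
          σ (Fin.natAdd a l) < σ (Fin.natAdd a k)) ⊆
          Finset.univ.filter fun l : Fin m => σ (Fin.natAdd a l) < σ (Fin.castAdd m i) := by
        intro l hl
        rcases Finset.mem_insert.1 hl with h1 | h1
        · subst h1; simp [hc]
        · simp only [Finset.mem_filter, Finset.mem_univ, true_and] at h1 ⊢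
          exact lt_trans h1 hc
      have hkn : k ∉ Finset.univ.filter fun l : Fin m =>
          σ (Fin.natAdd a l) < σ (Fin.natAdd a k) := by simp
      have := Finset.card_le_card hsub
      rw [Finset.card_insert_of_notMem hkn] at this
      unfold tcode rnk at h
      omega
  · intro hc
    apply Finset.card_le_card
    intro l hl
    simp only [Finset.mem_filter, Finset.mem_univ, true_and] at hl ⊢
    exact lt_trans hl hc

lemma apply_natAdd_eq (k : Fin m) :
    (σ (Fin.natAdd a k) : ℕ) = cval (psiF σ) (rnk σ k) := by
  rw [val_eq_card σ (Fin.natAdd a k), card_split]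
  unfold cval
  rw [Nat.add_comm]
  congr 1
  have hiff : ∀ i : Fin a, i ∈ (Finset.univ : Finset (Fin a)) →
      ((σ (Fin.castAdd m i) < σ (Fin.natAdd a k)) ↔ ((psiF σ i : ℕ) ≤ rnk σ k)) := by
    intro i _
    rw [← tcode_le_iff σ hσ]
    rfl
  rw [Finset.filter_congr hiff]

end Block1

section Psi

variable {J : List ℕ} (σ : Equiv.Perm (Fin (a + m))) (hσ : Des σ ⊆ DesComp (a :: J))

include hσ

lemma psiF_monotone : Monotone (psiF σ) := by
  intro i j hij
  rcases eq_or_lt_of_le hij with rfl | hlt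
  · exact le_refl _
  rw [Fin.le_def]
  show tcode σ i ≤ tcode σ j
  apply Finset.card_le_card
  intro k hk
  simp only [Finset.mem_filter, Finset.mem_univ, true_and] at hk ⊢
  exact lt_trans hk ((block1_lt_iff σ hσ i j).mpr hlt)

lemma des_psiP : Des (psiP σ) ⊆ DesComp J := by
  intro x hx
  obtain ⟨⟨hx0, hxm⟩, hw⟩ := (mem_Des_iff _ x).1 hx
  rw [wrd_eq _ hxm, wrd_eq _ (show x - 1 < m by omega)] at hw
  rw [psiP_apply, psiP_apply] at hw
  have hlt := (rnk_lt_iff σ _ _).1 hw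
  have hmem : a + x ∈ Des σ := by
    rw [mem_Des_iff]
    refine ⟨⟨by omega, by omega⟩, ?_⟩
    rw [wrd_eq σ (show a + x < a + m by omega), wrd_eq σ (show a + x - 1 < a + m by omega)]
    have e1 : (⟨a + x, by omega⟩ : Fin (a + m)) = Fin.natAdd a ⟨x, hxm⟩ := Fin.ext rfl
    have e2 : (⟨a + x - 1, by omega⟩ : Fin (a + m)) = Fin.natAdd a ⟨x - 1, by omega⟩ :=
      Fin.ext (by simp; omega)
    rw [e1, e2]
    exact hlt
  rcases mem_desComp_cons.1 (hσ hmem) with ⟨_, he⟩ | ⟨y, hy, he⟩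
  · omega
  · have : x = y := by omega
    rwa [this]

lemma Phi_psi : Phi (psiF σ) (psiP σ) (psiF_monotone σ hσ) = σ := by
  apply Equiv.ext
  intro p
  apply Fin.ext
  induction p using Fin.addCases with
  | left i =>
    rw [Phi_apply, phiFun_castAdd, apply_castAdd_eq σ hσ i]
    show (tcode σ i) + (i : ℕ) = (i : ℕ) + tcode σ i
    omega
  | right k =>
    rw [Phi_apply, phiFun_natAdd, apply_natAdd_eq σ hσ k, psiP_apply]

end Psi

set_option maxHeartbeats 2000000 in
lemma des_Phi {J : List ℕ} {f : Fin a → Fin (m + 1)} {σ' : Equiv.Perm (Fin m)}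
    (hf : Monotone f) (hσ' : Des σ' ⊆ DesComp J) (hm : J.sum = m) :
    Des (Phi f σ' hf) ⊆ DesComp (a :: J) := by
  intro x hx
  obtain ⟨⟨hx0, hxn⟩, hw⟩ := (mem_Des_iff _ x).1 hx
  rw [wrd_eq _ hxn, wrd_eq _ (show x - 1 < a + m by omega)] at hw
  rcases lt_trichotomy x a with hxa | hxa | hxa
  · exfalso
    have e1 : (⟨x, hxn⟩ : Fin (a + m)) = Fin.castAdd m ⟨x, hxa⟩ := Fin.ext rfl
    have e2 : (⟨x - 1, by omega⟩ : Fin (a + m)) = Fin.castAdd m ⟨x - 1, by omega⟩ :=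
      Fin.ext rfl
    rw [e1, e2, Phi_apply, Phi_apply, phiFun_castAdd, phiFun_castAdd] at hw
    have hle : f ⟨x - 1, by omega⟩ ≤ f ⟨x, hxa⟩ := hf (Fin.mk_le_mk.mpr (Nat.sub_le x 1))
    rw [Fin.le_def] at hle
    simp only [Fin.val_mk] at hw
    omega
  · subst hxa
    apply mem_desComp_cons.2
    left
    refine ⟨?_, rfl⟩
    intro hJ
    rw [hJ] at hm
    simp at hm
    omega
  · have hk0 : 0 < x - a := by omega
    have hkm : x - a < m := by omega
    have e1 : (⟨x, hxn⟩ : Fin (a + m)) = Fin.natAdd a ⟨x - a, hkm⟩ := Fin.ext (by simp; omega)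
    have e2 : (⟨x - 1, by omega⟩ : Fin (a + m)) = Fin.natAdd a ⟨x - a - 1, by omega⟩ :=
      Fin.ext (by simp; omega)
    rw [e1] at hw
    rw [e2] at hw
    rw [Phi_apply, Phi_apply] at hw
    rw [phiFun_natAdd] at hw
    rw [phiFun_natAdd] at hw
    have hlt : (σ' ⟨x - a, hkm⟩ : ℕ) < (σ' ⟨x - a - 1, by omega⟩ : ℕ) :=
      (cval_strictMono f).lt_iff_lt.1 hw
    have hmem : x - a ∈ Des σ' := by
      rw [mem_Des_iff]
      refine ⟨⟨hk0, hkm⟩, ?_⟩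
      rw [wrd_eq σ' hkm, wrd_eq σ' (show x - a - 1 < m by omega)]
      exact hlt
    apply mem_desComp_cons.2
    right
    exact ⟨x - a, hσ' hmem, by omega⟩

lemma Phi_inv_val {f : Fin a → Fin (m + 1)} (hf : Monotone f) (σ' : Equiv.Perm (Fin m))
    (q : Fin (a + m)) :
    (∃ i : Fin a, (Phi f σ' hf)⁻¹ q = Fin.castAdd m i ∧ (q : ℕ) = (f i : ℕ) + i) ∨
    (∃ k : Fin m, (Phi f σ' hf)⁻¹ q = Fin.natAdd a k ∧ (q : ℕ) = cval f (σ' k)) := by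
  have hq : Phi f σ' hf ((Phi f σ' hf)⁻¹ q) = q := Equiv.apply_symm_apply _ q
  rcases lt_or_ge (((Phi f σ' hf)⁻¹ q : Fin (a + m)) : ℕ) a with h | h
  · left
    have he : (Phi f σ' hf)⁻¹ q = Fin.castAdd m ⟨((Phi f σ' hf)⁻¹ q : Fin (a + m)), h⟩ :=
      Fin.ext rfl
    refine ⟨⟨((Phi f σ' hf)⁻¹ q : Fin (a + m)), h⟩, he, ?_⟩
    have h3 : (q : ℕ) = (phiFun f σ' ((Phi f σ' hf)⁻¹ q) : ℕ) :=
      (congrArg Fin.val hq).symm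
    rw [he, phiFun_castAdd] at h3
    exact h3
  · right
    have hlt := ((Phi f σ' hf)⁻¹ q).isLt
    have he : (Phi f σ' hf)⁻¹ q =
        Fin.natAdd a ⟨((Phi f σ' hf)⁻¹ q : Fin (a + m)) - a, by omega⟩ :=
      Fin.ext (by simp only [Fin.coe_natAdd, Fin.val_mk]; omega)
    refine ⟨⟨((Phi f σ' hf)⁻¹ q : Fin (a + m)) - a, by omega⟩, he, ?_⟩
    have h3 : (q : ℕ) = (phiFun f σ' ((Phi f σ' hf)⁻¹ q) : ℕ) :=
      (congrArg Fin.val hq).symm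
    rw [he, phiFun_natAdd] at h3
    exact h3

def gmapN (σ' : Equiv.Perm (Fin m)) (v : Fin (m + 1)) : ℕ :=
  if h : (v : ℕ) = 0 then 0
  else m - (σ'⁻¹ ⟨(v : ℕ) - 1, by have := v.isLt; omega⟩ : ℕ)

lemma Sc_inv_castAdd {f : Fin a → Fin (m + 1)} (hf : Monotone f) (σ' : Equiv.Perm (Fin m))
    {x : ℕ} (hx : x < a) :
    Sc (Phi f σ' hf)⁻¹ x = gmapN σ' (f ⟨x, hx⟩) := by
  set σ := Phi f σ' hf with hσdef
  have hx' : x < a + m := by omega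
  have hidx : (⟨x, hx'⟩ : Fin (a + m)) = Fin.castAdd m ⟨x, hx⟩ := Fin.ext rfl
  have hinvinv : σ⁻¹⁻¹ ⟨x, hx'⟩ = σ (Fin.castAdd m ⟨x, hx⟩) := by rw [inv_inv, hidx]
  have hcast : (σ (Fin.castAdd m ⟨x, hx⟩) : ℕ) = (f ⟨x, hx⟩ : ℕ) + x := by
    rw [hσdef, Phi_apply, phiFun_castAdd, Fin.val_mk]
  by_cases h0 : (f ⟨x, hx⟩ : ℕ) = 0
  · rw [gmapN, dif_pos h0]
    apply Sc_eq_zero_of σ⁻¹ hx'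
    intro q hq1 hq2
    rw [hinvinv, Fin.lt_def, hcast, h0] at hq1
    rcases Phi_inv_val hf σ' q with ⟨i, hi, hv⟩ | ⟨k, hk, hv⟩
    · rw [hi, Fin.lt_def] at hq2
      simp only [Fin.coe_castAdd, Fin.val_mk] at hq2
      omega
    · have hcg := cval_gt hf ⟨x, hx⟩ (show (f ⟨x, hx⟩ : ℕ) ≤ (σ' k : ℕ) by omega)
      simp only [Fin.val_mk] at hcg
      omega
  · have hfx := (f ⟨x, hx⟩).isLt
    have hv : (f ⟨x, hx⟩ : ℕ) - 1 < m := by omega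
    set w : Fin m := σ'⁻¹ ⟨(f ⟨x, hx⟩ : ℕ) - 1, hv⟩ with hwdef
    have hσw : σ' w = ⟨(f ⟨x, hx⟩ : ℕ) - 1, hv⟩ := Equiv.apply_symm_apply σ' _
    set j₀ : Fin (a + m) := σ (Fin.natAdd a w) with hj₀def
    have hj₀inv : σ⁻¹ j₀ = Fin.natAdd a w := Equiv.symm_apply_apply σ _
    have hj₀val : (j₀ : ℕ) = cval f ((f ⟨x, hx⟩ : ℕ) - 1) := by
      rw [hj₀def, hσdef, Phi_apply, phiFun_natAdd, hσw, Fin.val_mk]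
    have hres : Sc σ⁻¹ x = (a + m) - (σ⁻¹ j₀ : ℕ) := by
      apply Sc_eq_of σ⁻¹ hx' j₀
      · rw [Fin.lt_def, hinvinv, hcast, hj₀val]
        have := cval_lt_of hf ⟨x, hx⟩ (show (f ⟨x, hx⟩ : ℕ) - 1 < (f ⟨x, hx⟩ : ℕ) by omega)
        simp only [Fin.val_mk] at this
        omega
      · rw [hj₀inv, Fin.lt_def]
        simp only [Fin.coe_natAdd, Fin.val_mk]
        omega
      · intro q hq1 hq2
        rw [Fin.lt_def, hinvinv, hcast] at hq1
        rcases Phi_inv_val hf σ' q with ⟨i, hi, hval⟩ | ⟨k, hk, hval⟩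
        · exfalso
          rw [hi, Fin.lt_def] at hq2
          simp only [Fin.coe_castAdd, Fin.val_mk] at hq2
          have hle : f ⟨x, hx⟩ ≤ f i := hf (by rw [Fin.le_def]; simp only [Fin.val_mk]; omega)
          rw [Fin.le_def] at hle
          omega
        · have hlt : (σ' k : ℕ) < (f ⟨x, hx⟩ : ℕ) := by
            have := (cval_lt_iff hf ⟨x, hx⟩ ((σ' k : ℕ)))
            simp only [Fin.val_mk] at this
            rw [hval] at hq1
            exact this.1 (by omega)
          have hmono : cval f ((σ' k : ℕ)) ≤ cval f ((f ⟨x, hx⟩ : ℕ) - 1) :=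
            (cval_strictMono f).monotone (by omega)
          rw [Fin.le_def, hval, hj₀val]
          exact hmono
    rw [hres, gmapN, dif_neg h0, hj₀inv]
    simp only [Fin.coe_natAdd]
    have hww : (σ'⁻¹ ⟨(f ⟨x, hx⟩ : ℕ) - 1, by omega⟩ : ℕ) = (w : ℕ) := by rw [hwdef]
    rw [hww]
    have := w.isLt
    omega

lemma Sc_inv_natAdd {f : Fin a → Fin (m + 1)} (hf : Monotone f) (σ' : Equiv.Perm (Fin m))
    {x : ℕ} (hxm : x < m) :
    Sc (Phi f σ' hf)⁻¹ (a + x) = Sc σ'⁻¹ x := by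
  set σ := Phi f σ' hf with hσdef
  have hx' : a + x < a + m := by omega
  have hidx : (⟨a + x, hx'⟩ : Fin (a + m)) = Fin.natAdd a ⟨x, hxm⟩ := Fin.ext rfl
  have hinvinv : σ⁻¹⁻¹ ⟨a + x, hx'⟩ = σ (Fin.natAdd a ⟨x, hxm⟩) := by rw [inv_inv, hidx]
  have hnat : (σ (Fin.natAdd a ⟨x, hxm⟩) : ℕ) = cval f (σ' ⟨x, hxm⟩) := by
    rw [hσdef, Phi_apply, phiFun_natAdd]
  have hinvinv' : σ'⁻¹⁻¹ ⟨x, hxm⟩ = σ' ⟨x, hxm⟩ := by rw [inv_inv]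
  set L' := Finset.univ.filter
    (fun w : Fin m => w < σ'⁻¹⁻¹ ⟨x, hxm⟩ ∧ (⟨x, hxm⟩ : Fin m) < σ'⁻¹ w) with hL'def
  by_cases hne : L'.Nonempty
  · set w₀ := L'.max' hne with hw₀def
    have hw₀mem := Finset.mem_filter.1 (L'.max'_mem hne)
    obtain ⟨-, hw1, hw2⟩ := hw₀mem
    rw [← hw₀def] at hw1 hw2
    have hRHS : Sc σ'⁻¹ x = m - (σ'⁻¹ w₀ : ℕ) := by
      apply Sc_eq_of σ'⁻¹ hxm w₀ hw1 hw2
      intro w h1 h2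
      exact Finset.le_max' L' w (Finset.mem_filter.mpr ⟨Finset.mem_univ _, h1, h2⟩)
    set j₀ : Fin (a + m) := σ (Fin.natAdd a (σ'⁻¹ w₀)) with hj₀def
    have hj₀inv : σ⁻¹ j₀ = Fin.natAdd a (σ'⁻¹ w₀) := Equiv.symm_apply_apply σ _
    have hj₀val : (j₀ : ℕ) = cval f (w₀ : ℕ) := by
      rw [hj₀def, hσdef, Phi_apply, phiFun_natAdd, Equiv.Perm.inv_def σ', Equiv.apply_symm_apply]
    have hLHS : Sc σ⁻¹ (a + x) = (a + m) - (σ⁻¹ j₀ : ℕ) := by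
      apply Sc_eq_of σ⁻¹ hx' j₀
      · rw [Fin.lt_def, hinvinv, hnat, hj₀val]
        apply cval_strictMono f
        rw [hinvinv'] at hw1
        rw [Fin.lt_def] at hw1
        exact hw1
      · rw [hj₀inv, Fin.lt_def]
        simp only [Fin.coe_natAdd, Fin.val_mk]
        rw [Fin.lt_def] at hw2
        simp only [Fin.val_mk] at hw2
        omega
      · intro q hq1 hq2
        rw [Fin.lt_def, hinvinv, hnat] at hq1
        rcases Phi_inv_val hf σ' q with ⟨i, hi, hval⟩ | ⟨k, hk, hval⟩
        · exfalso
          rw [hi, Fin.lt_def] at hq2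
          simp only [Fin.coe_castAdd, Fin.val_mk] at hq2
          have := i.isLt
          omega
        · have hkx : (σ' k : ℕ) < (σ' ⟨x, hxm⟩ : ℕ) := by
            rw [hval] at hq1
            exact (cval_strictMono f).lt_iff_lt.1 hq1
          have hkL : σ' k ∈ L' := by
            rw [hL'def]
            refine Finset.mem_filter.mpr ⟨Finset.mem_univ _, ?_, ?_⟩
            · rw [hinvinv', Fin.lt_def]; exact hkx
            · rw [Equiv.Perm.inv_def σ', Equiv.symm_apply_apply]
              rw [hk, Fin.lt_def] at hq2
              simp only [Fin.coe_natAdd, Fin.val_mk] at hq2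
              rw [Fin.lt_def]
              simp only [Fin.val_mk]
              omega
          have hle : σ' k ≤ w₀ := Finset.le_max' L' _ hkL
          rw [Fin.le_def, hval, hj₀val]
          exact (cval_strictMono f).monotone hle
    rw [hLHS, hRHS, hj₀inv]
    simp only [Fin.coe_natAdd]
    have harith : ∀ u : ℕ, a + m - (a + u) = m - u := fun u => by omega
    exact harith _
  · have hRHS : Sc σ'⁻¹ x = 0 := by
      apply Sc_eq_zero_of σ'⁻¹ hxm
      intro w h1 h2
      exact hne ⟨w, Finset.mem_filter.mpr ⟨Finset.mem_univ _, h1, h2⟩⟩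
    have hLHS : Sc σ⁻¹ (a + x) = 0 := by
      apply Sc_eq_zero_of σ⁻¹ hx'
      intro q hq1 hq2
      rw [Fin.lt_def, hinvinv, hnat] at hq1
      rcases Phi_inv_val hf σ' q with ⟨i, hi, hval⟩ | ⟨k, hk, hval⟩
      · rw [hi, Fin.lt_def] at hq2
        simp only [Fin.coe_castAdd, Fin.val_mk] at hq2
        have := i.isLt
        omega
      · apply hne
        refine ⟨σ' k, Finset.mem_filter.mpr ⟨Finset.mem_univ _, ?_, ?_⟩⟩
        · rw [hinvinv', Fin.lt_def]
          rw [hval] at hq1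
          exact (cval_strictMono f).lt_iff_lt.1 hq1
        · rw [Equiv.Perm.inv_def σ', Equiv.symm_apply_apply]
          rw [hk, Fin.lt_def] at hq2
          simp only [Fin.coe_natAdd, Fin.val_mk] at hq2
          rw [Fin.lt_def]
          simp only [Fin.val_mk]
          omega
    rw [hLHS, hRHS]

lemma sub_inj {M : ℕ} (y z : Fin M) (h : M - (y : ℕ) = M - (z : ℕ)) : y = z :=
  Fin.ext (by have := y.isLt; have := z.isLt; omega)

lemma gmapN_inj (σ' : Equiv.Perm (Fin m)) (v w : Fin (m + 1))
    (h : gmapN σ' v = gmapN σ' w) : v = w := by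
  unfold gmapN at h
  by_cases hv : (v : ℕ) = 0 <;> by_cases hw : (w : ℕ) = 0
  · exact Fin.ext (by omega)
  · rw [dif_pos hv, dif_neg hw] at h
    exact absurd h.symm (Nat.sub_ne_zero_of_lt (Fin.isLt _))
  · rw [dif_neg hv, dif_pos hw] at h
    exact absurd h (Nat.sub_ne_zero_of_lt (Fin.isLt _))
  · rw [dif_neg hv, dif_neg hw] at h
    have h2 := sub_inj _ _ h
    have h3 := (Equiv.injective σ'⁻¹) h2
    have h4 := congrArg Fin.val h3
    simp only [Fin.val_mk] at h4
    exact Fin.ext (by omega)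

def gmapF (σ' : Equiv.Perm (Fin m)) (v : Fin (m + 1)) : Fin (m + 1) :=
  if h : (v : ℕ) = 0 then ⟨0, Nat.succ_pos m⟩
  else ⟨m - (σ'⁻¹ ⟨(v : ℕ) - 1, by have := v.isLt; omega⟩ : ℕ), by omega⟩

lemma gmapF_val (σ' : Equiv.Perm (Fin m)) (v : Fin (m + 1)) :
    ((gmapF σ' v : Fin (m + 1)) : ℕ) = gmapN σ' v := by
  unfold gmapF gmapN
  split <;> rfl

lemma gmapF_inj (σ' : Equiv.Perm (Fin m)) : Function.Injective (gmapF σ') := by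
  intro v w h
  apply gmapN_inj σ' v w
  rw [← gmapF_val, ← gmapF_val, h]

noncomputable def gE (σ' : Equiv.Perm (Fin m)) : Equiv.Perm (Fin (m + 1)) :=
  Equiv.ofBijective (gmapF σ') (Finite.injective_iff_bijective.mp (gmapF_inj σ'))

lemma gE_val (σ' : Equiv.Perm (Fin m)) (v : Fin (m + 1)) :
    ((gE σ' v : Fin (m + 1)) : ℕ) = gmapN σ' v := gmapF_val σ' v

lemma comp_sort_mono {k : ℕ} {α : Type*} [LinearOrder α] (f : Fin k → α) (hf : Monotone f)
    (s : Equiv.Perm (Fin k)) :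
    (f ∘ ⇑s) ∘ ⇑(Tuple.sort (f ∘ ⇑s)) = f := by
  have he : (f ∘ ⇑s) ∘ ⇑(Tuple.sort (f ∘ ⇑s)) = f ∘ ⇑((Tuple.sort (f ∘ ⇑s)).trans s) := by
    rw [Equiv.coe_trans, ← Function.comp_assoc]
  have h1 : Monotone (f ∘ ⇑((Tuple.sort (f ∘ ⇑s)).trans s)) := by
    rw [← he]; exact Tuple.monotone_sort _
  have h2 : Monotone (f ∘ ⇑(1 : Equiv.Perm (Fin k))) := by
    simpa using hf
  have h3 := Tuple.unique_monotone h1 h2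
  rw [he, h3]
  simp

lemma sum_comp_perm (k : ℕ) (g : Equiv.Perm (Fin (m + 1))) :
    ∑ f ∈ Finset.univ.filter (fun f : Fin k → Fin (m + 1) => ∀ a b : Fin k, a ≤ b → f a ≤ f b),
        ∏ t : Fin k, (MvPolynomial.X ((g (f t) : ℕ)) : MvPolynomial ℕ ℤ) =
    ∑ f ∈ Finset.univ.filter (fun f : Fin k → Fin (m + 1) => ∀ a b : Fin k, a ≤ b → f a ≤ f b),
        ∏ t : Fin k, (MvPolynomial.X ((f t : ℕ)) : MvPolynomial ℕ ℤ) := by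
  apply Finset.sum_nbij' (i := fun f => (⇑g ∘ f) ∘ ⇑(Tuple.sort (⇑g ∘ f)))
    (j := fun f => (⇑g.symm ∘ f) ∘ ⇑(Tuple.sort (⇑g.symm ∘ f)))
  · intro f _
    refine Finset.mem_filter.mpr ⟨Finset.mem_univ _, ?_⟩
    intro u v huv
    exact Tuple.monotone_sort (⇑g ∘ f) huv
  · intro f _
    refine Finset.mem_filter.mpr ⟨Finset.mem_univ _, ?_⟩
    intro u v huv
    exact Tuple.monotone_sort (⇑g.symm ∘ f) huv
  · intro f hf
    have hm : Monotone f := fun u v huv => (Finset.mem_filter.1 hf).2 u v huv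
    show (⇑g.symm ∘ ((⇑g ∘ f) ∘ ⇑(Tuple.sort (⇑g ∘ f)))) ∘
        ⇑(Tuple.sort (⇑g.symm ∘ ((⇑g ∘ f) ∘ ⇑(Tuple.sort (⇑g ∘ f))))) = f
    have h1 : ⇑g.symm ∘ ((⇑g ∘ f) ∘ ⇑(Tuple.sort (⇑g ∘ f))) = f ∘ ⇑(Tuple.sort (⇑g ∘ f)) := by
      funext t
      simp [Function.comp]
    rw [h1]
    exact comp_sort_mono f hm _
  · intro f hf
    have hm : Monotone f := fun u v huv => (Finset.mem_filter.1 hf).2 u v huv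
    show (⇑g ∘ ((⇑g.symm ∘ f) ∘ ⇑(Tuple.sort (⇑g.symm ∘ f)))) ∘
        ⇑(Tuple.sort (⇑g ∘ ((⇑g.symm ∘ f) ∘ ⇑(Tuple.sort (⇑g.symm ∘ f))))) = f
    have h1 : ⇑g ∘ ((⇑g.symm ∘ f) ∘ ⇑(Tuple.sort (⇑g.symm ∘ f))) =
        f ∘ ⇑(Tuple.sort (⇑g.symm ∘ f)) := by
      funext t
      simp [Function.comp]
    rw [h1]
    exact comp_sort_mono f hm _
  · intro f _
    exact (Equiv.prod_comp (Tuple.sort (⇑g ∘ f))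
      (fun t => (MvPolynomial.X (((⇑g ∘ f) t : Fin (m + 1)) : ℕ) : MvPolynomial ℕ ℤ))).symm

lemma inner_sum (σ' : Equiv.Perm (Fin m)) :
    ∑ f ∈ Finset.univ.filter
        (fun f : Fin a → Fin (m + 1) => ∀ u v : Fin a, u ≤ v → f u ≤ f v),
      ∏ t : Fin a, (MvPolynomial.X (gmapN σ' (f t)) : MvPolynomial ℕ ℤ) = hpoly a m := by
  have hstep : ∀ f : Fin a → Fin (m + 1),
      (∏ t : Fin a, (MvPolynomial.X (gmapN σ' (f t)) : MvPolynomial ℕ ℤ)) =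
      ∏ t : Fin a, (MvPolynomial.X ((gE σ' (f t) : Fin (m + 1)) : ℕ) : MvPolynomial ℕ ℤ) := by
    intro f
    exact Finset.prod_congr rfl fun t _ => by rw [gE_val]
  rw [Finset.sum_congr rfl fun f _ => hstep f]
  unfold hpoly
  exact sum_comp_perm a (gE σ')

lemma weight_Phi {f : Fin a → Fin (m + 1)} (hf : Monotone f) (σ' : Equiv.Perm (Fin m)) :
    ∏ i ∈ Finset.range (a + m),
        (MvPolynomial.X (Sc (Phi f σ' hf)⁻¹ i) : MvPolynomial ℕ ℤ) =
    (∏ t : Fin a, (MvPolynomial.X (gmapN σ' (f t)) : MvPolynomial ℕ ℤ)) *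
      ∏ i ∈ Finset.range m, (MvPolynomial.X (Sc σ'⁻¹ i) : MvPolynomial ℕ ℤ) := by
  rw [Finset.prod_range_add]
  congr 1
  · rw [← Fin.prod_univ_eq_prod_range (fun i => (MvPolynomial.X (Sc (Phi f σ' hf)⁻¹ i) :
      MvPolynomial ℕ ℤ)) a]
    apply Finset.prod_congr rfl
    intro i _
    have := Sc_inv_castAdd hf σ' i.isLt
    rw [Fin.eta] at this
    rw [this]
  · apply Finset.prod_congr rfl
    intro x hx
    rw [Sc_inv_natAdd hf σ' (Finset.mem_range.1 hx)]

lemma mono_of_mem {J : List ℕ}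
    {p : (Fin a → Fin (m + 1)) × Equiv.Perm (Fin m)}
    (hp : p ∈ (Finset.univ.filter
        (fun f : Fin a → Fin (m + 1) => ∀ u v : Fin a, u ≤ v → f u ≤ f v)) ×ˢ
      (Finset.univ.filter fun σ' : Equiv.Perm (Fin m) => Des σ' ⊆ DesComp J)) :
    Monotone p.1 :=
  fun u v huv => (Finset.mem_filter.1 (Finset.mem_product.1 hp).1).2 u v huv

lemma sum_perm_eq {J : List ℕ} (hmJ : J.sum = m) :
    ∑ σ ∈ Finset.univ.filter
        (fun σ : Equiv.Perm (Fin (a + m)) => Des σ ⊆ DesComp (a :: J)),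
      ∏ i ∈ Finset.range (a + m), (MvPolynomial.X (Sc σ⁻¹ i) : MvPolynomial ℕ ℤ) =
    ∑ p ∈ (Finset.univ.filter
        (fun f : Fin a → Fin (m + 1) => ∀ u v : Fin a, u ≤ v → f u ≤ f v)) ×ˢ
      (Finset.univ.filter fun σ' : Equiv.Perm (Fin m) => Des σ' ⊆ DesComp J),
      (∏ t : Fin a, (MvPolynomial.X (gmapN p.2 (p.1 t)) : MvPolynomial ℕ ℤ)) *
        ∏ i ∈ Finset.range m, (MvPolynomial.X (Sc p.2⁻¹ i) : MvPolynomial ℕ ℤ) := by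
  symm
  refine Finset.sum_bij' (fun p hp => Phi p.1 p.2 (mono_of_mem hp))
    (fun σ _ => (psiF σ, psiP σ)) ?_ ?_ ?_ ?_ ?_
  · intro p hp
    refine Finset.mem_filter.mpr ⟨Finset.mem_univ _, ?_⟩
    exact des_Phi (mono_of_mem hp)
      ((Finset.mem_filter.1 (Finset.mem_product.1 hp).2).2) hmJ
  · intro σ hσ
    have hσ' := (Finset.mem_filter.1 hσ).2
    refine Finset.mem_product.mpr ⟨?_, ?_⟩
    · refine Finset.mem_filter.mpr ⟨Finset.mem_univ _, ?_⟩
      intro u v huv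
      exact psiF_monotone σ hσ' huv
    · exact Finset.mem_filter.mpr ⟨Finset.mem_univ _, des_psiP σ hσ'⟩
  · intro p hp
    exact Prod.ext (psiF_Phi (mono_of_mem hp) p.2) (psiP_Phi (mono_of_mem hp) p.2)
  · intro σ hσ
    exact Phi_psi σ (Finset.mem_filter.1 hσ).2
  · intro p hp
    exact (weight_Phi (mono_of_mem hp) p.2).symm

end SPF

/-- Flagged product formula for inverse saillance codes: for a composition `I = (i_1,…,i_r)`
of `n`, the generating function of the saillance codes of the inverses over
`{σ | Des(σ) ⊆ Des(I)}` is `h_{i_1}(X_{i_2+⋯+i_r}) ⋯ h_{i_{r-1}}(X_{i_r}) h_{i_r}(X_0)`. -/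
theorem flagged_product_formula_scode (n : ℕ) (I : List ℕ)
    (hpos : ∀ p ∈ I, 0 < p) (hsum : I.sum = n) :
    ∑ σ ∈ Finset.univ.filter
        (fun σ : Equiv.Perm (Fin n) => Paper.Des σ ⊆ Paper.DesComp I),
        ∏ i ∈ Finset.range n, (MvPolynomial.X (Paper.Sc σ⁻¹ i) : MvPolynomial ℕ ℤ) =
      ∏ j ∈ Finset.range I.length, Paper.hpoly (I.getD j 0) ((I.drop (j + 1)).sum) := by
  induction I generalizing n with
  | nil =>
    simp only [List.sum_nil] at hsum
    subst hsum
    simp only [List.length_nil, Finset.range_zero, Finset.prod_empty, Finset.prod_range_zero]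
    have hfil : (Finset.univ.filter
        (fun σ : Equiv.Perm (Fin 0) => Paper.Des σ ⊆ Paper.DesComp [])) = Finset.univ := by
      apply Finset.filter_true_of_mem
      intro σ _
      unfold Paper.Des
      simp
    rw [hfil, Finset.sum_const]
    simp
  | cons a J ih =>
    rw [List.sum_cons] at hsum
    have hposJ : ∀ p ∈ J, 0 < p := fun p hp => hpos p (List.mem_cons_of_mem a hp)
    subst hsum
    rw [List.length_cons, Finset.prod_range_succ']
    simp only [List.getD_cons_succ, List.drop_succ_cons, List.getD_cons_zero, List.drop_zero]
    rw [← ih J.sum hposJ rfl]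
    rw [SPF.sum_perm_eq rfl]
    rw [Finset.sum_product]
    rw [Finset.sum_comm]
    have hinner : ∀ σ' ∈ (Finset.univ.filter
        fun σ' : Equiv.Perm (Fin J.sum) => Paper.Des σ' ⊆ Paper.DesComp J),
        (∑ f ∈ (Finset.univ.filter
          (fun f : Fin a → Fin (J.sum + 1) => ∀ u v : Fin a, u ≤ v → f u ≤ f v)),
          (∏ t : Fin a, (MvPolynomial.X (SPF.gmapN σ' (f t)) : MvPolynomial ℕ ℤ)) *
            ∏ i ∈ Finset.range J.sum, (MvPolynomial.X (Paper.Sc σ'⁻¹ i) : MvPolynomial ℕ ℤ))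
        = Paper.hpoly a J.sum *
            ∏ i ∈ Finset.range J.sum, (MvPolynomial.X (Paper.Sc σ'⁻¹ i) : MvPolynomial ℕ ℤ) := by
      intro σ' _
      rw [← Finset.sum_mul]
      rw [SPF.inner_sum σ']
    rw [Finset.sum_congr rfl hinner]
    rw [← Finset.mul_sum]
    rw [mul_comm]
end

section
/- Single-insertion shuffle lemma for the major code: let β ∈ S_n and let 1⧢_i β be the permutation obtained by shifting β up by 1 and inserting letter 1 at position i+1. Then the first component of the major code of 1⧢_i β equals τ_M(β)(i), where τ_M(β) is the permutation of {0,...,n} defined by: τ_M(β)(i) = des(β) − j if i is the j-th descent of β, and τ_M(β)(i) = des(β) + j − 1 if i is the j-th rise of β (position 0 counting as a rise); moreover the remaining components of the major code of 1⧢_i β equal the major code of β. -/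
open Finset

namespace Paper

lemma word_length {n : ℕ} (σ : Equiv.Perm (Fin n)) : (word σ).length = n := by simp [word]

lemma word_getElem {n : ℕ} (σ : Equiv.Perm (Fin n)) (t : ℕ) (h : t < (word σ).length) :
    (word σ)[t] = (σ ⟨t, by simpa [word] using h⟩ : ℕ) + 1 := by
  simp [word]

lemma majL_map_succ (l : List ℕ) : majL (l.map (· + 1)) = majL l := by
  unfold majL
  rw [List.length_map]
  apply Finset.sum_congr rfl
  intro t ht
  simp only [Finset.mem_range] at ht
  have h1 : t + 1 < l.length := by omega
  have h0 : t < l.length := by omega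
  rw [List.getD_eq_getElem _ _ (by simpa using h1), List.getD_eq_getElem _ _ (by simpa using h0),
      List.getD_eq_getElem _ _ h1, List.getD_eq_getElem _ _ h0, List.getElem_map, List.getElem_map]
  simp

lemma key (n i : ℕ) (hi : i ≤ n) (f g : ℕ → ℕ)
    (hg2 : ∀ t, t < n → 2 ≤ g t) (hg0 : ∀ t, n ≤ t → g t = 0)
    (hf1 : ∀ t, t < i → f t = g t) (hf2 : f i = 1) (hf3 : ∀ t, i < t → f t = g (t - 1)) :
    (∑ t ∈ Finset.range n, if f (t + 1) < f t then t + 1 else 0)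
      + (if 0 < i ∧ i < n ∧ g i < g (i - 1) then i else 0)
    = (∑ s ∈ Finset.range (n - 1), if g (s + 1) < g s then s + 1 else 0)
      + i + ((Finset.Ico (i + 1) n).filter fun d => g d < g (d - 1)).card := by
  have H5 : ∀ j, i ≤ j →
      (∑ t ∈ Finset.Ico (j + 1) n, if f (t + 1) < f t then t + 1 else 0)
        = (∑ s ∈ Finset.Ico j (n - 1), if g (s + 1) < g s then s + 1 else 0)
          + ∑ s ∈ Finset.Ico j (n - 1), if g (s + 1) < g s then 1 else 0 := by
    intro j hj
    rw [← Finset.sum_add_distrib, Finset.sum_Ico_eq_sum_range, Finset.sum_Ico_eq_sum_range]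
    have hd : n - (j + 1) = n - 1 - j := by omega
    rw [hd]
    apply Finset.sum_congr rfl
    intro k _
    have e0 : j + 1 + k = j + k + 1 := by omega
    rw [e0, hf3 (j + k + 1 + 1) (by omega), hf3 (j + k + 1) (by omega)]
    have e1 : j + k + 1 + 1 - 1 = j + k + 1 := by omega
    have e2 : j + k + 1 - 1 = j + k := by omega
    rw [e1, e2]
    split_ifs <;> omega
  have H6 : ((Finset.Ico (i + 1) n).filter fun d => g d < g (d - 1)).card
      = ∑ s ∈ Finset.Ico i (n - 1), if g (s + 1) < g s then 1 else 0 := by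
    rw [Finset.card_filter, Finset.sum_Ico_eq_sum_range, Finset.sum_Ico_eq_sum_range]
    have hd : n - (i + 1) = n - 1 - i := by omega
    rw [hd]
    apply Finset.sum_congr rfl
    intro k _
    have e0 : i + 1 + k = i + k + 1 := by omega
    rw [e0]
    have e2 : i + k + 1 - 1 = i + k := by omega
    rw [e2]
  have H3 : (∑ t ∈ Finset.Ico 0 (i - 1), if f (t + 1) < f t then t + 1 else 0)
      = ∑ t ∈ Finset.Ico 0 (i - 1), if g (t + 1) < g t then t + 1 else 0 := by
    apply Finset.sum_congr rfl
    intro t ht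
    simp only [Finset.mem_Ico] at ht
    rw [hf1 (t + 1) (by omega), hf1 t (by omega)]
  have H7 : (∑ s ∈ Finset.range (n - 1), if g (s + 1) < g s then s + 1 else 0)
      = ∑ s ∈ Finset.Ico 0 (n - 1), if g (s + 1) < g s then s + 1 else 0 := by
    rw [Finset.range_eq_Ico]
  rcases Nat.eq_zero_or_pos i with h0 | h0
  · subst h0
    rw [if_neg (by rintro ⟨h, _⟩; exact absurd h (lt_irrefl 0))]
    rcases Nat.eq_zero_or_pos n with hn | hn
    · subst hn; simp
    · rw [Finset.range_eq_Ico, Finset.sum_eq_sum_Ico_succ_bot hn]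
      have hF0 : (if f (0 + 1) < f 0 then 0 + 1 else 0) = 0 := by
        rw [hf3 1 (by omega), hf2]
        have := hg2 0 hn
        rw [if_neg (by simp; omega)]
      rw [hF0, H5 0 (le_refl 0), H6]
      omega
  · have H1 : (∑ t ∈ Finset.range n, if f (t + 1) < f t then t + 1 else 0)
        = (∑ t ∈ Finset.Ico 0 i, if f (t + 1) < f t then t + 1 else 0)
          + ∑ t ∈ Finset.Ico i n, if f (t + 1) < f t then t + 1 else 0 := by
      rw [Finset.range_eq_Ico,
        Finset.sum_Ico_consecutive (fun t => if f (t + 1) < f t then t + 1 else 0)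
          (Nat.zero_le i) hi]
    have H2 : (∑ t ∈ Finset.Ico 0 i, if f (t + 1) < f t then t + 1 else 0)
        = (∑ t ∈ Finset.Ico 0 (i - 1), if g (t + 1) < g t then t + 1 else 0) + i := by
      have e : i = (i - 1) + 1 := by omega
      rw [e, Finset.sum_Ico_succ_top (Nat.zero_le _)]
      have e1 : i - 1 + 1 = i := by omega
      rw [e1, H3, hf2, hf1 (i - 1) (by omega)]
      have h2 : 2 ≤ g (i - 1) := hg2 _ (by omega)
      rw [if_pos (by omega)]
    rcases eq_or_lt_of_le hi with he | hlt'
    · subst he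
      have hIco : (∑ t ∈ Finset.Ico i i, if f (t + 1) < f t then t + 1 else 0) = 0 := by simp
      have hcard : ((Finset.Ico (i + 1) i).filter fun d => g d < g (d - 1)).card = 0 := by
        rw [Finset.Ico_eq_empty (by omega)]; simp
      have hif : (if 0 < i ∧ i < i ∧ g i < g (i - 1) then i else 0) = 0 := by
        rw [if_neg]; rintro ⟨_, h, _⟩; exact absurd h (lt_irrefl i)
      rw [H1, hIco, H2, hcard, hif, H7]
    · have H4 : (∑ t ∈ Finset.Ico i n, if f (t + 1) < f t then t + 1 else 0)
          = ∑ t ∈ Finset.Ico (i + 1) n, if f (t + 1) < f t then t + 1 else 0 := by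
        rw [Finset.sum_eq_sum_Ico_succ_bot hlt']
        rw [hf3 (i + 1) (by omega), hf2]
        have e : i + 1 - 1 = i := by omega
        rw [e, if_neg (by have := hg2 i hlt'; omega)]
        omega
      have H9 : (∑ s ∈ Finset.Ico 0 (n - 1), if g (s + 1) < g s then s + 1 else 0)
          = (∑ s ∈ Finset.Ico 0 (i - 1), if g (s + 1) < g s then s + 1 else 0)
            + ((if g i < g (i - 1) then i else 0)
            + ∑ s ∈ Finset.Ico i (n - 1), if g (s + 1) < g s then s + 1 else 0) := by
        rw [← Finset.sum_Ico_consecutive (fun s => if g (s + 1) < g s then s + 1 else 0)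
          (Nat.zero_le (i - 1)) (show i - 1 ≤ n - 1 by omega)]
        congr 1
        rw [Finset.sum_eq_sum_Ico_succ_bot (show i - 1 < n - 1 by omega)]
        have e1 : i - 1 + 1 = i := by omega
        rw [e1]
      have H10 : (if 0 < i ∧ i < n ∧ g i < g (i - 1) then i else 0)
          = if g i < g (i - 1) then i else 0 := by
        by_cases hgg : g i < g (i - 1)
        · rw [if_pos ⟨h0, hlt', hgg⟩, if_pos hgg]
        · rw [if_neg (by rintro ⟨_, _, h⟩; exact hgg h), if_neg hgg]
      rw [H1, H2, H4, H5 i (le_refl i), H6, H7, H9, H10]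
      omega

section Insert

variable {n : ℕ} (β : Equiv.Perm (Fin n)) (i : ℕ) (hi : i ≤ n)
  (βi : Equiv.Perm (Fin (n + 1)))

lemma word_insert
    (hlt : ∀ (j : Fin (n + 1)) (hj : (j : ℕ) < i),
      (βi j : ℕ) = (β ⟨(j : ℕ), show (j : ℕ) < n + 0 by omega⟩ : ℕ) + 1)
    (heq : ∀ j : Fin (n + 1), (j : ℕ) = i → (βi j : ℕ) = 0)
    (hgt : ∀ (j : Fin (n + 1)) (hj : i < (j : ℕ)),
      (βi j : ℕ) = (β ⟨(j : ℕ) - 1, show (j : ℕ) - 1 < n + 0 by have := j.isLt; omega⟩ : ℕ) + 1) :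
    word βi = ((word β).map (· + 1)).take i ++ 1 :: ((word β).map (· + 1)).drop i := by
  have hlen : ((word β).map (· + 1)).length = n := by rw [List.length_map, word_length]
  apply List.ext_getElem
  · simp only [List.length_append, List.length_take, List.length_cons, List.length_drop,
      hlen, word_length]
    omega
  · intro j h1 h2
    rw [word_length] at h1
    have htl : (((word β).map (· + 1)).take i).length = i := by
      rw [List.length_take, hlen]; omega
    rcases lt_trichotomy j i with hj | hj | hj
    · rw [List.getElem_append_left (by omega), List.getElem_take, List.getElem_map,
        word_getElem, word_getElem]
      rw [hlt ⟨j, h1⟩ hj]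
    · subst hj
      rw [List.getElem_append_right (by omega)]
      simp only [htl]
      rw [List.getElem_cons, dif_pos (by omega : j - j = 0), word_getElem]
      rw [heq ⟨j, h1⟩ rfl]
    · rw [List.getElem_append_right (by omega)]
      simp only [htl]
      rw [List.getElem_cons, dif_neg (by omega : ¬ j - i = 0)]
      rw [List.getElem_drop, List.getElem_map, word_getElem, word_getElem]
      rw [hgt ⟨j, h1⟩ hj]
      congr 2
      exact congrArg Fin.val (congrArg β (Fin.ext (show j - 1 = i + (j - i - 1) by omega)))

lemma filter_word_insert (c : ℕ) (hc : 2 ≤ c)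
    (hw : word βi = ((word β).map (· + 1)).take i ++ 1 :: ((word β).map (· + 1)).drop i) :
    (word βi).filter (fun x => decide (c ≤ x)) =
      ((word β).map (· + 1)).filter (fun x => decide (c ≤ x)) := by
  rw [hw, List.filter_append, List.filter_cons]
  rw [if_neg (by simp; omega)]
  rw [← List.filter_append, List.take_append_drop]

end Insert

end Paper

/-- Single-insertion shuffle lemma for the major code: if `βi = 1⧢_i β`, then the first
component of `Mc(βi)` is `τ_M(β)(i)` and the remaining components are `Mc(β)`. -/
theorem majcode_single_insertion (n : ℕ) (β : Equiv.Perm (Fin n)) (i : ℕ) (hi : i ≤ n)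
    (βi : Equiv.Perm (Fin (n + 1)))
    (hlt : ∀ (j : Fin (n + 1)) (hj : (j : ℕ) < i),
      (βi j : ℕ) = (β ⟨(j : ℕ), by omega⟩ : ℕ) + 1)
    (heq : ∀ j : Fin (n + 1), (j : ℕ) = i → (βi j : ℕ) = 0)
    (hgt : ∀ (j : Fin (n + 1)) (hj : i < (j : ℕ)),
      (βi j : ℕ) = (β ⟨(j : ℕ) - 1, by have := j.isLt; omega⟩ : ℕ) + 1) :
    Paper.Mc βi 0 = Paper.tauM β i ∧ ∀ t : ℕ, Paper.Mc βi (t + 1) = Paper.Mc β t := by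
  classical
  have hw := Paper.word_insert β i hi βi hlt heq hgt
  have hlenM : ((Paper.word β).map (· + 1)).length = n := by
    rw [List.length_map, Paper.word_length]
  have hlenW : (Paper.word βi).length = n + 1 := Paper.word_length βi
  have hMval : ∀ t (ht : t < n), ((Paper.word β).map (· + 1)).getD t 0
      = (β ⟨t, ht⟩ : ℕ) + 2 := by
    intro t ht
    rw [List.getD_eq_getElem _ _ (by omega), List.getElem_map, Paper.word_getElem]
  have hWval : ∀ t (ht : t < n + 1), (Paper.word βi).getD t 0 = (βi ⟨t, ht⟩ : ℕ) + 1 := by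
    intro t ht
    rw [List.getD_eq_getElem _ _ (by omega), Paper.word_getElem]
  have hg2 : ∀ t, t < n → 2 ≤ ((Paper.word β).map (· + 1)).getD t 0 := by
    intro t ht
    rw [hMval t ht]
    omega
  have hg0 : ∀ t, n ≤ t → ((Paper.word β).map (· + 1)).getD t 0 = 0 := by
    intro t ht
    apply List.getD_eq_default
    omega
  have hf1 : ∀ t, t < i → (Paper.word βi).getD t 0 = ((Paper.word β).map (· + 1)).getD t 0 := by
    intro t ht
    have h1 : t < n + 1 := by omega
    have h2 : t < n := by omega
    rw [hWval t h1, hMval t h2, hlt ⟨t, h1⟩ ht]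
  have hf2 : (Paper.word βi).getD i 0 = 1 := by
    have h1 : i < n + 1 := by omega
    rw [hWval i h1, heq ⟨i, h1⟩ rfl]
  have hf3 : ∀ t, i < t → (Paper.word βi).getD t 0
      = ((Paper.word β).map (· + 1)).getD (t - 1) 0 := by
    intro t ht
    by_cases htn : t ≤ n
    · have h1 : t < n + 1 := by omega
      have h2 : t - 1 < n := by omega
      rw [hWval t h1, hMval (t - 1) h2, hgt ⟨t, h1⟩ ht]
    · rw [List.getD_eq_default _ _ (by omega), List.getD_eq_default _ _ (by omega)]
  have KEY := Paper.key n i hi (fun t => (Paper.word βi).getD t 0)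
    (fun t => ((Paper.word β).map (· + 1)).getD t 0) hg2 hg0 hf1 hf2 hf3
  have hA : Paper.majL (Paper.word βi)
      = ∑ t ∈ Finset.range n,
          if (Paper.word βi).getD (t + 1) 0 < (Paper.word βi).getD t 0 then t + 1 else 0 := by
    unfold Paper.majL
    rw [hlenW, Nat.add_sub_cancel]
  have hB : Paper.majL ((Paper.word β).map (· + 1))
      = ∑ s ∈ Finset.range (n - 1),
          if ((Paper.word β).map (· + 1)).getD (s + 1) 0
            < ((Paper.word β).map (· + 1)).getD s 0 then s + 1 else 0 := by
    unfold Paper.majL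
    rw [hlenM]
  rw [← hA, ← hB] at KEY
  -- part 2
  have part2 : ∀ t : ℕ, Paper.Mc βi (t + 1) = Paper.Mc β t := by
    intro t
    have kgen : ∀ c : ℕ, 2 ≤ c → (Paper.word βi).filter (fun x => decide (c ≤ x))
        = ((Paper.word β).filter (fun x => decide (c - 1 ≤ x))).map (· + 1) := by
      intro c hc
      rw [Paper.filter_word_insert β i βi c hc hw, List.filter_map]
      congr 1
      apply List.filter_congr
      intro a _
      simp only [Function.comp]
      rw [decide_eq_decide]
      omega
    unfold Paper.Mc
    rw [show t + 1 + 1 = t + 2 from rfl, show t + 1 + 2 = t + 3 from rfl,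
      kgen (t + 2) (by omega), kgen (t + 3) (by omega),
      Paper.majL_map_succ, Paper.majL_map_succ]
    rw [show t + 2 - 1 = t + 1 from rfl, show t + 3 - 1 = t + 2 from rfl]
  -- Mc βi 0
  have hflt1 : (Paper.word βi).filter (fun x => decide (0 + 1 ≤ x)) = Paper.word βi := by
    apply List.filter_eq_self.mpr
    intro a ha
    simp only [Paper.word, List.mem_ofFn] at ha
    obtain ⟨j, rfl⟩ := ha
    simp
  have hflt2 : (Paper.word βi).filter (fun x => decide (0 + 2 ≤ x))
      = (Paper.word β).map (· + 1) := by
    rw [Paper.filter_word_insert β i βi (0 + 2) (by omega) hw]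
    apply List.filter_eq_self.mpr
    intro a ha
    simp only [List.mem_map, Paper.word, List.mem_ofFn] at ha
    obtain ⟨b, ⟨j, rfl⟩, rfl⟩ := ha
    simp
  have hMc0 : Paper.Mc βi 0
      = Paper.majL (Paper.word βi) - Paper.majL ((Paper.word β).map (· + 1)) := by
    unfold Paper.Mc
    rw [hflt1, hflt2]
  -- descent translation
  have hDesg : ∀ d, d ∈ Paper.Des β ↔ (0 < d ∧ d < n ∧
      ((Paper.word β).map (· + 1)).getD d 0 < ((Paper.word β).map (· + 1)).getD (d - 1) 0) := by
    intro d
    simp only [Paper.Des, Finset.mem_filter, Finset.mem_Ioo]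
    constructor
    · rintro ⟨⟨h1, h2⟩, h3⟩
      have hd1 : d - 1 < n := by omega
      refine ⟨h1, h2, ?_⟩
      rw [hMval d h2, hMval (d - 1) hd1]
      unfold Paper.wrd at h3
      rw [dif_pos h2, dif_pos hd1] at h3
      omega
    · rintro ⟨h1, h2, h3⟩
      have hd1 : d - 1 < n := by omega
      rw [hMval d h2, hMval (d - 1) hd1] at h3
      refine ⟨⟨h1, h2⟩, ?_⟩
      unfold Paper.wrd
      rw [dif_pos h2, dif_pos hd1]
      omega
  have hC : (Paper.Des β).filter (fun d => ¬ d ≤ i)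
      = (Finset.Ico (i + 1) n).filter
          (fun d => ((Paper.word β).map (· + 1)).getD d 0
            < ((Paper.word β).map (· + 1)).getD (d - 1) 0) := by
    ext d
    simp only [Finset.mem_filter, Finset.mem_Ico, not_le]
    constructor
    · rintro ⟨hd, hdi⟩
      have h := (hDesg d).mp hd
      exact ⟨⟨by omega, h.2.1⟩, h.2.2⟩
    · rintro ⟨⟨ha, hb⟩, hc⟩
      exact ⟨(hDesg d).mpr ⟨by omega, hb, hc⟩, by omega⟩
  have hCcard := congrArg Finset.card hC
  have hsplit : ((Paper.Des β).filter (fun d => d ≤ i)).card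
      + ((Paper.Des β).filter (fun d => ¬ d ≤ i)).card = Paper.des β := by
    unfold Paper.des
    exact Finset.card_filter_add_card_filter_not _
  have hInLe : ((Paper.Des β).filter (fun d => d ≤ i)).card ≤ i := by
    have hsub : (Paper.Des β).filter (fun d => d ≤ i) ⊆ Finset.Icc 1 i := by
      intro d hd
      simp only [Finset.mem_filter, Paper.Des, Finset.mem_Ioo] at hd
      simp only [Finset.mem_Icc]
      omega
    have := Finset.card_le_card hsub
    rwa [Nat.card_Icc, Nat.add_sub_cancel] at this
  refine ⟨?_, part2⟩
  rw [hMc0]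
  unfold Paper.tauM
  by_cases hmem : i ∈ Paper.Des β
  · rw [if_pos hmem]
    have hgi := (hDesg i).mp hmem
    rw [if_pos hgi] at KEY
    omega
  · rw [if_neg hmem]
    have hgi : ¬ (0 < i ∧ i < n ∧
        ((Paper.word β).map (· + 1)).getD i 0 < ((Paper.word β).map (· + 1)).getD (i - 1) 0) :=
      fun h => hmem ((hDesg i).mpr h)
    rw [if_neg hgi] at KEY
    have hIn : (Finset.range (i + 1)).filter (fun r => r ∈ Paper.Des β)
        = (Paper.Des β).filter (fun d => d ≤ i) := by
      ext d
      simp only [Finset.mem_filter, Finset.mem_range]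
      constructor
      · rintro ⟨ha, hb⟩; exact ⟨hb, by omega⟩
      · rintro ⟨ha, hb⟩; exact ⟨by omega, ha⟩
    have hsplit2 : ((Finset.range (i + 1)).filter (fun r => r ∈ Paper.Des β)).card
        + ((Finset.range (i + 1)).filter (fun r => r ∉ Paper.Des β)).card = i + 1 := by
      rw [Finset.card_filter_add_card_filter_not, Finset.card_range]
    rw [hIn] at hsplit2
    omega
end

section
/- Interval property of τ_M: for β ∈ S_n and 0 ≤ k ≤ n, the set { τ_M(β)(i) : 0 ≤ i ≤ k } equals the interval [d, d+k], where d is the number of descents of β strictly greater than k. -/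
open Finset

open Paper

private lemma zero_not_mem_Des {n : ℕ} (β : Equiv.Perm (Fin n)) : 0 ∉ Des β := by
  simp [Des]

private lemma pos_of_mem_Des {n : ℕ} {β : Equiv.Perm (Fin n)} {d : ℕ} (h : d ∈ Des β) :
    0 < d := by
  simp only [Des, mem_filter, mem_Ioo] at h; exact h.1.1

private lemma card_split {n : ℕ} (β : Equiv.Perm (Fin n)) (i : ℕ) :
    ((Des β).filter (fun d => d ≤ i)).card + ((Des β).filter (fun d => i < d)).card
      = des β := by
  rw [des]
  have h := Finset.card_filter_add_card_filter_not (s := Des β)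
    (p := fun d => d ≤ i)
  simp only [not_le] at h
  exact h

private lemma range_split {n : ℕ} (β : Equiv.Perm (Fin n)) (i : ℕ) :
    ((Des β).filter (fun d => d ≤ i)).card
      + ((Finset.range (i+1)).filter (fun r => r ∉ Des β)).card = i + 1 := by
  have h1 : (Des β).filter (fun d => d ≤ i)
      = (Finset.range (i+1)).filter (fun r => r ∈ Des β) := by
    ext x
    simp only [mem_filter, mem_range, Nat.lt_succ_iff]
    tauto
  rw [h1]
  have h := Finset.card_filter_add_card_filter_not (s := Finset.range (i+1))
    (p := fun r => r ∈ Des β)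
  simpa using h

private lemma one_le_rises {n : ℕ} (β : Equiv.Perm (Fin n)) (i : ℕ) :
    1 ≤ ((Finset.range (i+1)).filter (fun r => r ∉ Des β)).card := by
  apply Finset.card_pos.mpr
  exact ⟨0, by simp [zero_not_mem_Des]⟩

/-- Interval property of `τ_M`: for `0 ≤ k ≤ n`, the set `{τ_M(β)(i) | 0 ≤ i ≤ k}` is the
interval `[d, d+k]`, where `d` is the number of descents of `β` strictly greater than `k`. -/
theorem tauM_image_interval (n k : ℕ) (hk : k ≤ n) (β : Equiv.Perm (Fin n)) :
    (Finset.range (k + 1)).image (Paper.tauM β) =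
      Finset.Icc (((Paper.Des β).filter fun d => k < d).card)
        ((((Paper.Des β).filter fun d => k < d).card) + k) := by
  induction k with
  | zero =>
    have h0 : (0:ℕ) ∉ Des β := zero_not_mem_Des β
    have hD : (Des β).filter (fun d => 0 < d) = Des β :=
      Finset.filter_true_of_mem (fun d hd => pos_of_mem_Des hd)
    have hval : tauM β 0 = des β := by
      rw [tauM, if_neg h0]
      have h2 := range_split β 0
      have h3 := one_le_rises β 0
      have h1 := card_split β 0
      omega
    rw [hD]
    simp [hval, des]
  | succ k ih =>
    have IH := ih (by omega)
    rw [Finset.range_add_one, Finset.image_insert, IH]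
    by_cases h : k + 1 ∈ Des β
    · have hval : tauM β (k+1) = ((Des β).filter (fun d => k+1 < d)).card := by
        rw [tauM, if_pos h]
        have h1 := card_split β (k+1)
        omega
      have hdd : (Des β).filter (fun d => k < d)
          = insert (k+1) ((Des β).filter (fun d => k+1 < d)) := by
        ext x
        simp only [mem_filter, mem_insert]
        constructor
        · rintro ⟨hx, hlt⟩
          by_cases hx1 : x = k+1
          · exact Or.inl hx1
          · exact Or.inr ⟨hx, by omega⟩
        · rintro (rfl | ⟨hx, hlt⟩)
          · exact ⟨h, by omega⟩
          · exact ⟨hx, by omega⟩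
      have hcd : ((Des β).filter (fun d => k < d)).card
          = ((Des β).filter (fun d => k+1 < d)).card + 1 := by
        rw [hdd, Finset.card_insert_of_notMem (by simp)]
      rw [hcd, hval]
      ext x
      simp only [Finset.mem_insert, Finset.mem_Icc]
      omega
    · have hdd : (Des β).filter (fun d => k < d) = (Des β).filter (fun d => k+1 < d) := by
        ext x
        simp only [mem_filter]
        constructor
        · rintro ⟨hx, hlt⟩
          refine ⟨hx, ?_⟩
          rcases Nat.lt_or_ge (k+1) x with h' | h'
          · exact h'
          · exfalso; have : x = k+1 := by omega
            exact h (this ▸ hx)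
        · rintro ⟨hx, hlt⟩
          exact ⟨hx, by omega⟩
      have hval : tauM β (k+1) = ((Des β).filter (fun d => k+1 < d)).card + (k+1) := by
        rw [tauM, if_neg h]
        have h1 := card_split β (k+1)
        have h2 := range_split β (k+1)
        have h3 := one_le_rises β (k+1)
        omega
      rw [hdd, hval]
      ext x
      simp only [Finset.mem_insert, Finset.mem_Icc]
      omega
end
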